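/- arXiv:1310.7779 — 10 statements merged into one kernel-verified Lean document; each statement's English description precedes it below -/
import Mathlib

section
/- Let k be a field, n ≥ 2, and let a₁, …, aₙ and b₁, …, bₙ be two n-tuples of positive integers, each with gcd equal to 1. If the kernel of the k-algebra homomorphism k[x₁, …, xₙ] → k[t] sending xᵢ ↦ t^{aᵢ} equals the kernel of the k-algebra homomorphism sending xᵢ ↦ t^{bᵢ}, then aᵢ = bᵢ for all i. -/
/-- If two tuples of positive integers with gcd 1 define the same monomial curve ideal,
they are equal. -/
theorem stmt_1 (k : Type*) [Field k] (n : ℕ) (hn : 2 ≤ n)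
    (a b : Fin n → ℕ) (hpa : ∀ i, 0 < a i) (hpb : ∀ i, 0 < b i)
    (hga : Finset.univ.gcd a = 1) (hgb : Finset.univ.gcd b = 1)
    (h : RingHom.ker (MvPolynomial.aeval
            (fun i : Fin n => (Polynomial.X : Polynomial k) ^ a i) :
            MvPolynomial (Fin n) k →ₐ[k] Polynomial k)
       = RingHom.ker (MvPolynomial.aeval
            (fun i : Fin n => (Polynomial.X : Polynomial k) ^ b i) :
            MvPolynomial (Fin n) k →ₐ[k] Polynomial k)) :
    a = b := by
  have key : ∀ i j, b i * a j = b j * a i := by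
    intro i j
    have hmem : (MvPolynomial.X i ^ a j - MvPolynomial.X j ^ a i : MvPolynomial (Fin n) k) ∈
        RingHom.ker (MvPolynomial.aeval
          (fun i : Fin n => (Polynomial.X : Polynomial k) ^ a i) :
          MvPolynomial (Fin n) k →ₐ[k] Polynomial k) := by
      simp [RingHom.mem_ker, ← pow_mul, mul_comm]
    rw [h, RingHom.mem_ker] at hmem
    simp only [map_sub, map_pow, MvPolynomial.aeval_X, ← pow_mul, sub_eq_zero] at hmem
    have := congrArg Polynomial.natDegree hmem
    simpa using this
  funext j
  have hba : b j ∣ a j := by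
    have hd : b j ∣ Finset.univ.gcd (fun i => a j * b i) := by
      apply Finset.dvd_gcd
      intro i _
      exact ⟨a i, by rw [mul_comm (a j)]; exact key i j⟩
    rw [Finset.gcd_mul_left, hgb, mul_one] at hd; simpa using hd
  have hab : a j ∣ b j := by
    have hd : a j ∣ Finset.univ.gcd (fun i => b j * a i) := by
      apply Finset.dvd_gcd
      intro i _
      exact ⟨b i, by rw [← key i j]; ring⟩
    rw [Finset.gcd_mul_left, hga, mul_one] at hd; simpa using hd
  exact Nat.dvd_antisymm hab hba
end

section
/- With A and a₁, a₂, a₃, a₄ as in the context: the integers a₁, a₂, a₃, a₄ are all positive, A·(a₁, a₂, a₃, a₄)ᵀ = 0, and if moreover gcd(a₁, a₂, a₃, a₄) = 1, then for each i ∈ {1, 2, 3, 4} the integer cᵢ is the least positive integer r such that r·aᵢ lies in the additive submonoid of ℕ generated by {aⱼ : j ≠ i}; that is, A is a principal matrix of (a₁, a₂, a₃, a₄). -/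
private lemma bezout4 (a : Fin 4 → ℤ) (h3 : 0 ≤ a 3) (h : Finset.univ.gcd a = 1) :
    ∃ u : Fin 4 → ℤ, u 0 * a 0 + u 1 * a 1 + u 2 * a 2 + u 3 * a 3 = 1 := by
  have h' : (Int.gcd (a 0) (Int.gcd (a 1) (Int.gcd (a 2) (a 3))) : ℤ) = 1 := by
    rw [show (Finset.univ : Finset (Fin 4)) = {0,1,2,3} from rfl] at h
    simp only [Finset.gcd_insert, Finset.gcd_singleton, Int.normalize_of_nonneg h3] at h
    rw [Int.coe_gcd, Int.coe_gcd, Int.coe_gcd]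
    simpa using h
  refine ⟨![Int.gcdA (a 0) (Int.gcd (a 1) (Int.gcd (a 2) (a 3))),
    Int.gcdB (a 0) (Int.gcd (a 1) (Int.gcd (a 2) (a 3))) * Int.gcdA (a 1) (Int.gcd (a 2) (a 3)),
    Int.gcdB (a 0) (Int.gcd (a 1) (Int.gcd (a 2) (a 3))) * Int.gcdB (a 1) (Int.gcd (a 2) (a 3)) * Int.gcdA (a 2) (a 3),
    Int.gcdB (a 0) (Int.gcd (a 1) (Int.gcd (a 2) (a 3))) * Int.gcdB (a 1) (Int.gcd (a 2) (a 3)) * Int.gcdB (a 2) (a 3)], ?_⟩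
  have e0 := Int.gcd_eq_gcd_ab (a 0) ((Int.gcd (a 1) (Int.gcd (a 2) (a 3)) : ℕ) : ℤ)
  have e1 := Int.gcd_eq_gcd_ab (a 1) ((Int.gcd (a 2) (a 3) : ℕ) : ℤ)
  have e2 := Int.gcd_eq_gcd_ab (a 2) (a 3)
  simp only [Matrix.cons_val_zero, Matrix.cons_val_one, Matrix.head_cons,
    Matrix.cons_val_two, Matrix.tail_cons, Matrix.cons_val_three]
  rw [← h', e0, e1, e2]; ring

private lemma existsW (d₁₃ d₁₄ d₂₁ d₂₄ d₃₁ d₃₂ d₄₂ d₄₃ : ℤ) (a u v : Fin 4 → ℤ)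
    (ha0 : a 0 = d₁₃*d₁₄*d₃₂ + d₁₃*d₁₄*d₄₂ + d₁₃*d₂₄*d₃₂ + d₁₄*d₃₂*d₄₃ + d₁₄*d₄₂*d₄₃)
    (ha1 : a 1 = d₁₃*d₁₄*d₂₁ + d₁₃*d₂₁*d₂₄ + d₁₄*d₂₁*d₄₃ + d₂₁*d₂₄*d₄₃ + d₂₄*d₃₁*d₄₃)
    (ha2 : a 2 = d₁₄*d₂₁*d₃₂ + d₁₄*d₃₁*d₃₂ + d₁₄*d₃₁*d₄₂ + d₂₁*d₂₄*d₃₂ + d₂₄*d₃₁*d₃₂)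
    (ha3 : a 3 = d₁₃*d₂₁*d₄₂ + d₂₁*d₃₂*d₄₃ + d₂₁*d₄₂*d₄₃ + d₃₁*d₃₂*d₄₃ + d₃₁*d₄₂*d₄₃)
    (hu : u 0 * a 0 + u 1 * a 1 + u 2 * a 2 + u 3 * a 3 = 1)
    (hv : v 0 * a 0 + v 1 * a 1 + v 2 * a 2 + v 3 * a 3 = 0) :
    ∃ x y z : ℤ,
      x*d₂₁ + y*d₃₁ = v 0 ∧
      -(x*(d₃₂+d₄₂)) + y*d₃₂ + z*d₄₂ = v 1 ∧
      -(y*(d₁₃+d₄₃)) + z*d₄₃ = v 2 ∧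
      x*d₂₄ - z*(d₁₄+d₂₄) = v 3 := by
  rw [ha0, ha1, ha2, ha3] at hu hv
  set M : Matrix (Fin 4) (Fin 4) ℤ :=
    !![-(d₂₁+d₃₁) - u 0, d₂₁, d₃₁, 0;
       -u 1, -(d₃₂+d₄₂), d₃₂, d₄₂;
       d₁₃ - u 2, 0, -(d₁₃+d₄₃), d₄₃;
       d₁₄ - u 3, d₂₄, 0, -(d₁₄+d₂₄)] with hM
  have hdet : M.det = 1 := by
    rw [hM]
    simp [Matrix.det_succ_row_zero, Fin.sum_univ_succ, Fin.succAbove]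
    linear_combination hu
  set w : Fin 4 → ℤ := M.adjugate.mulVec v with hw
  have hMw : M.mulVec w = v := by
    rw [hw, Matrix.mulVec_mulVec, Matrix.mul_adjugate, hdet]; simp
  have E0 := congrFun hMw 0
  have E1 := congrFun hMw 1
  have E2 := congrFun hMw 2
  have E3 := congrFun hMw 3
  simp only [hM, Matrix.mulVec, dotProduct, Fin.sum_univ_four, Matrix.cons_val',
    Matrix.cons_val_zero, Matrix.cons_val_one, Matrix.head_cons, Matrix.empty_val',
    Matrix.cons_val_fin_one, Matrix.head_fin_const, Matrix.cons_val_two, Matrix.tail_cons,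
    Matrix.cons_val_three, Matrix.head_fin_const, Matrix.of_apply] at E0 E1 E2 E3
  have hw0 : w 0 = 0 := by
    linear_combination
      (-(d₁₃*d₁₄*d₃₂ + d₁₃*d₁₄*d₄₂ + d₁₃*d₂₄*d₃₂ + d₁₄*d₃₂*d₄₃ + d₁₄*d₄₂*d₄₃))*E0
      + (-(d₁₃*d₁₄*d₂₁ + d₁₃*d₂₁*d₂₄ + d₁₄*d₂₁*d₄₃ + d₂₁*d₂₄*d₄₃ + d₂₄*d₃₁*d₄₃))*E1
      + (-(d₁₄*d₂₁*d₃₂ + d₁₄*d₃₁*d₃₂ + d₁₄*d₃₁*d₄₂ + d₂₁*d₂₄*d₃₂ + d₂₄*d₃₁*d₃₂))*E2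
      + (-(d₁₃*d₂₁*d₄₂ + d₂₁*d₃₂*d₄₃ + d₂₁*d₄₂*d₄₃ + d₃₁*d₃₂*d₄₃ + d₃₁*d₄₂*d₄₃))*E3
      - hv - (w 0) * hu
  refine ⟨w 1, w 2, w 3, ?_, ?_, ?_, ?_⟩
  · linear_combination E0 - (-(d₂₁+d₃₁) - u 0) * hw0
  · linear_combination E1 - (-(u 1)) * hw0
  · linear_combination E2 - (d₁₃ - u 2) * hw0
  · linear_combination E3 - (d₁₄ - u 3) * hw0

private lemma keyIneq (c1 c2 c3 c4 p q r u v w x y z s t2 t3 t4 : ℤ)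
    (hp : 1 ≤ p) (hq : 1 ≤ q) (hr : 1 ≤ r) (hu : 1 ≤ u) (hv : 1 ≤ v) (hw : 1 ≤ w)
    (hc1 : c1 = p + q) (hc2 : c2 = r + u) (hc3 : 1 ≤ c3) (hc4 : w < c4)
    (hs : 1 ≤ s) (ht2 : 0 ≤ t2) (ht3 : 0 ≤ t3) (ht4 : 0 ≤ t4)
    (e0 : x*p + y*q = -s)
    (e1 : -(x*c2) + y*r + z*u = t2)
    (e2 : -(y*c3) + z*v = t3)
    (e3 : x*w - z*c4 = t4) : c1 ≤ s := by
  rcases le_or_gt x (-1) with hx | hx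
  · have hz : z ≤ -1 := by nlinarith
    have hy : y ≤ -1 := by nlinarith
    nlinarith
  · have hx0 : 0 ≤ x := by linarith
    have hy : y ≤ -1 := by nlinarith
    have hzx : x + 1 ≤ z := by nlinarith
    have hz1 : 1 ≤ z := by linarith
    nlinarith

private lemma extractT (b : Fin 4 → ℕ) (i : Fin 4) (m : ℕ)
    (hm : m ∈ AddSubmonoid.closure {m : ℕ | ∃ j, j ≠ i ∧ m = b j}) :
    ∃ t : Fin 4 → ℕ, t i = 0 ∧ m = t 0 * b 0 + t 1 * b 1 + t 2 * b 2 + t 3 * b 3 := by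
  induction hm using AddSubmonoid.closure_induction with
  | mem x hx =>
    obtain ⟨j, hj, rfl⟩ := hx
    refine ⟨fun k => if k = j then 1 else 0, by simp [Ne.symm hj], ?_⟩
    fin_cases j <;> simp
  | zero => exact ⟨0, rfl, by simp⟩
  | add x y _ _ hx hy =>
    obtain ⟨t, ht0, rfl⟩ := hx
    obtain ⟨t', ht0', rfl⟩ := hy
    exact ⟨t + t', by simp [ht0, ht0'], by simp [Pi.add_apply]; ring⟩

set_option maxHeartbeats 2000000 in
/-- Bresinsky-type matrices: the signed minors are positive, are killed by `A`, and if
relatively prime then `A` is a principal matrix of them. -/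
theorem stmt_3
    (c₁ c₂ c₃ c₄ d₁₃ d₁₄ d₂₁ d₂₄ d₃₁ d₃₂ d₄₂ d₄₃ : ℕ)
    (hc₁ : 2 ≤ c₁) (hc₂ : 2 ≤ c₂) (hc₃ : 2 ≤ c₃) (hc₄ : 2 ≤ c₄)
    (hd₁₃ : 0 < d₁₃) (hd₁₄ : 0 < d₁₄) (hd₂₁ : 0 < d₂₁) (hd₂₄ : 0 < d₂₄)
    (hd₃₁ : 0 < d₃₁) (hd₃₂ : 0 < d₃₂) (hd₄₂ : 0 < d₄₂) (hd₄₃ : 0 < d₄₃)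
    (hcol₁ : c₁ = d₂₁ + d₃₁) (hcol₂ : c₂ = d₃₂ + d₄₂)
    (hcol₃ : c₃ = d₁₃ + d₄₃) (hcol₄ : c₄ = d₁₄ + d₂₄)
    (A : Matrix (Fin 4) (Fin 4) ℤ)
    (hA : A = !![-(c₁ : ℤ), 0, (d₁₃ : ℤ), (d₁₄ : ℤ);
                 (d₂₁ : ℤ), -(c₂ : ℤ), 0, (d₂₄ : ℤ);
                 (d₃₁ : ℤ), (d₃₂ : ℤ), -(c₃ : ℤ), 0;
                 0, (d₄₂ : ℤ), (d₄₃ : ℤ), -(c₄ : ℤ)])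
    (a : Fin 4 → ℤ)
    (ha : ∀ j : Fin 4, a j = (-1) ^ ((j : ℕ) + 1) *
        (A.submatrix (Fin.succAbove 0) (Fin.succAbove j)).det)
    :
    (∀ j, 0 < a j) ∧ A.mulVec a = 0 ∧
      (Finset.univ.gcd a = 1 →
        ∀ i : Fin 4,
          A i i = -((![c₁, c₂, c₃, c₄] i : ℕ) : ℤ) ∧
          IsLeast {s : ℕ | 0 < s ∧ s * (a i).toNat ∈
              AddSubmonoid.closure {m : ℕ | ∃ j, j ≠ i ∧ m = (a j).toNat}}
            (![c₁, c₂, c₃, c₄] i)) := by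
  subst hcol₁ hcol₂ hcol₃ hcol₄
  subst hA
  have ha0 : a 0 = (d₁₃:ℤ)*d₁₄*d₃₂ + d₁₃*d₁₄*d₄₂ + d₁₃*d₂₄*d₃₂ + d₁₄*d₃₂*d₄₃ + d₁₄*d₄₂*d₄₃ := by
    rw [ha 0]
    simp (config := { decide := true }) [Matrix.det_fin_three, Fin.succAbove,
      Matrix.submatrix_apply, Fin.lt_def, show ((3:Fin 4):ℕ) = 3 from rfl,
      show ((2:Fin 4):ℕ) = 2 from rfl, show (Fin.castSucc 2 : Fin 4) = 2 from rfl,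
      show (Fin.succ 2 : Fin 4) = 3 from rfl, show (Fin.castSucc 1 : Fin 4) = 1 from rfl,
      show (Fin.succ 1 : Fin 4) = 2 from rfl, show (Fin.castSucc 0 : Fin 4) = 0 from rfl,
      show (Fin.succ 0 : Fin 4) = 1 from rfl]
    push_cast
    ring
  have ha1 : a 1 = (d₁₃:ℤ)*d₁₄*d₂₁ + d₁₃*d₂₁*d₂₄ + d₁₄*d₂₁*d₄₃ + d₂₁*d₂₄*d₄₃ + d₂₄*d₃₁*d₄₃ := by
    rw [ha 1]
    simp (config := { decide := true }) [Matrix.det_fin_three, Fin.succAbove,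
      Matrix.submatrix_apply, Fin.lt_def, show ((3:Fin 4):ℕ) = 3 from rfl,
      show ((2:Fin 4):ℕ) = 2 from rfl, show (Fin.castSucc 2 : Fin 4) = 2 from rfl,
      show (Fin.succ 2 : Fin 4) = 3 from rfl, show (Fin.castSucc 1 : Fin 4) = 1 from rfl,
      show (Fin.succ 1 : Fin 4) = 2 from rfl, show (Fin.castSucc 0 : Fin 4) = 0 from rfl,
      show (Fin.succ 0 : Fin 4) = 1 from rfl]
    push_cast
    ring
  have ha2 : a 2 = (d₁₄:ℤ)*d₂₁*d₃₂ + d₁₄*d₃₁*d₃₂ + d₁₄*d₃₁*d₄₂ + d₂₁*d₂₄*d₃₂ + d₂₄*d₃₁*d₃₂ := by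
    rw [ha 2]
    simp (config := { decide := true }) [Matrix.det_fin_three, Fin.succAbove,
      Matrix.submatrix_apply, Fin.lt_def, show ((3:Fin 4):ℕ) = 3 from rfl,
      show ((2:Fin 4):ℕ) = 2 from rfl, show (Fin.castSucc 2 : Fin 4) = 2 from rfl,
      show (Fin.succ 2 : Fin 4) = 3 from rfl, show (Fin.castSucc 1 : Fin 4) = 1 from rfl,
      show (Fin.succ 1 : Fin 4) = 2 from rfl, show (Fin.castSucc 0 : Fin 4) = 0 from rfl,
      show (Fin.succ 0 : Fin 4) = 1 from rfl]
    push_cast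
    ring
  have ha3 : a 3 = (d₁₃:ℤ)*d₂₁*d₄₂ + d₂₁*d₃₂*d₄₃ + d₂₁*d₄₂*d₄₃ + d₃₁*d₃₂*d₄₃ + d₃₁*d₄₂*d₄₃ := by
    rw [ha 3]
    simp (config := { decide := true }) [Matrix.det_fin_three, Fin.succAbove,
      Matrix.submatrix_apply, Fin.lt_def, show ((3:Fin 4):ℕ) = 3 from rfl,
      show ((2:Fin 4):ℕ) = 2 from rfl, show (Fin.castSucc 2 : Fin 4) = 2 from rfl,
      show (Fin.succ 2 : Fin 4) = 3 from rfl, show (Fin.castSucc 1 : Fin 4) = 1 from rfl,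
      show (Fin.succ 1 : Fin 4) = 2 from rfl, show (Fin.castSucc 0 : Fin 4) = 0 from rfl,
      show (Fin.succ 0 : Fin 4) = 1 from rfl]
    push_cast
    ring
  have pd₁₃ : (0:ℤ) < d₁₃ := by exact_mod_cast hd₁₃
  have pd₁₄ : (0:ℤ) < d₁₄ := by exact_mod_cast hd₁₄
  have pd₂₁ : (0:ℤ) < d₂₁ := by exact_mod_cast hd₂₁
  have pd₂₄ : (0:ℤ) < d₂₄ := by exact_mod_cast hd₂₄
  have pd₃₁ : (0:ℤ) < d₃₁ := by exact_mod_cast hd₃₁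
  have pd₃₂ : (0:ℤ) < d₃₂ := by exact_mod_cast hd₃₂
  have pd₄₂ : (0:ℤ) < d₄₂ := by exact_mod_cast hd₄₂
  have pd₄₃ : (0:ℤ) < d₄₃ := by exact_mod_cast hd₄₃
  have hp0 : 0 < a 0 := by
    rw [ha0]
    nlinarith [mul_pos (mul_pos pd₁₃ pd₁₄) pd₃₂, mul_pos (mul_pos pd₁₃ pd₁₄) pd₄₂,
      mul_pos (mul_pos pd₁₃ pd₂₄) pd₃₂, mul_pos (mul_pos pd₁₄ pd₃₂) pd₄₃,
      mul_pos (mul_pos pd₁₄ pd₄₂) pd₄₃]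
  have hp1 : 0 < a 1 := by
    rw [ha1]
    nlinarith [mul_pos (mul_pos pd₁₃ pd₁₄) pd₂₁, mul_pos (mul_pos pd₁₃ pd₂₁) pd₂₄,
      mul_pos (mul_pos pd₁₄ pd₂₁) pd₄₃, mul_pos (mul_pos pd₂₁ pd₂₄) pd₄₃,
      mul_pos (mul_pos pd₂₄ pd₃₁) pd₄₃]
  have hp2 : 0 < a 2 := by
    rw [ha2]
    nlinarith [mul_pos (mul_pos pd₁₄ pd₂₁) pd₃₂, mul_pos (mul_pos pd₁₄ pd₃₁) pd₃₂,
      mul_pos (mul_pos pd₁₄ pd₃₁) pd₄₂, mul_pos (mul_pos pd₂₁ pd₂₄) pd₃₂,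
      mul_pos (mul_pos pd₂₄ pd₃₁) pd₃₂]
  have hp3 : 0 < a 3 := by
    rw [ha3]
    nlinarith [mul_pos (mul_pos pd₁₃ pd₂₁) pd₄₂, mul_pos (mul_pos pd₂₁ pd₃₂) pd₄₃,
      mul_pos (mul_pos pd₂₁ pd₄₂) pd₄₃, mul_pos (mul_pos pd₃₁ pd₃₂) pd₄₃,
      mul_pos (mul_pos pd₃₁ pd₄₂) pd₄₃]
  have hpos : ∀ j, 0 < a j := by
    intro j
    fin_cases j
    · exact hp0
    · exact hp1
    · exact hp2
    · exact hp3
  have hmv : Matrix.mulVec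
      !![-((d₂₁ + d₃₁ : ℕ) : ℤ), 0, (d₁₃ : ℤ), (d₁₄ : ℤ);
         (d₂₁ : ℤ), -((d₃₂ + d₄₂ : ℕ) : ℤ), 0, (d₂₄ : ℤ);
         (d₃₁ : ℤ), (d₃₂ : ℤ), -((d₁₃ + d₄₃ : ℕ) : ℤ), 0;
         0, (d₄₂ : ℤ), (d₄₃ : ℤ), -((d₁₄ + d₂₄ : ℕ) : ℤ)] a = 0 := by
    funext l
    fin_cases l
    · simp [Matrix.mulVec, dotProduct, Fin.sum_univ_four]
      push_cast
      linear_combination (-(d₂₁:ℤ)-d₃₁) * ha0 + (d₁₃:ℤ) * ha2 + (d₁₄:ℤ) * ha3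
    · simp [Matrix.mulVec, dotProduct, Fin.sum_univ_four]
      push_cast
      linear_combination (d₂₁:ℤ) * ha0 + (-(d₃₂:ℤ)-d₄₂) * ha1 + (d₂₄:ℤ) * ha3
    · simp [Matrix.mulVec, dotProduct, Fin.sum_univ_four]
      push_cast
      linear_combination (d₃₁:ℤ) * ha0 + (d₃₂:ℤ) * ha1 + (-(d₁₃:ℤ)-d₄₃) * ha2
    · simp [Matrix.mulVec, dotProduct, Fin.sum_univ_four]
      push_cast
      linear_combination (d₄₂:ℤ) * ha1 + (d₄₃:ℤ) * ha2 + (-(d₁₄:ℤ)-d₂₄) * ha3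
  have hna : ∀ j, ((a j).toNat : ℤ) = a j := fun j => Int.toNat_of_nonneg (hpos j).le
  refine ⟨hpos, hmv, ?_⟩
  intro hgcd i
  obtain ⟨u, hu⟩ := bezout4 a (hpos 3).le hgcd
  fin_cases i
  · constructor
    · norm_num
    · constructor
      · refine ⟨by show 0 < d₂₁ + d₃₁; omega, ?_⟩
        have hEq : (d₂₁ + d₃₁) * (a 0).toNat = d₁₃ * (a 2).toNat + d₁₄ * (a 3).toNat := by
          have h' : (((d₂₁ + d₃₁) * (a 0).toNat : ℕ) : ℤ)
              = ((d₁₃ * (a 2).toNat + d₁₄ * (a 3).toNat : ℕ) : ℤ) := by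
            push_cast [hna 0, hna 2, hna 3]
            linear_combination ((d₂₁:ℤ)+d₃₁) * ha0 - (d₁₃:ℤ) * ha2 - (d₁₄:ℤ) * ha3
          exact_mod_cast h'
        show (d₂₁ + d₃₁) * (a 0).toNat ∈
          AddSubmonoid.closure {m : ℕ | ∃ j, j ≠ (0 : Fin 4) ∧ m = (a j).toNat}
        rw [hEq]
        refine AddSubmonoid.add_mem _ ?_ ?_
        · simpa [nsmul_eq_mul] using nsmul_mem (AddSubmonoid.subset_closure
            (show (a 2).toNat ∈ {m : ℕ | ∃ j, j ≠ (0 : Fin 4) ∧ m = (a j).toNat} from ⟨2, by decide, rfl⟩)) d₁₃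
        · simpa [nsmul_eq_mul] using nsmul_mem (AddSubmonoid.subset_closure
            (show (a 3).toNat ∈ {m : ℕ | ∃ j, j ≠ (0 : Fin 4) ∧ m = (a j).toNat} from ⟨3, by decide, rfl⟩)) d₁₄
      · intro s hs
        obtain ⟨hs0, hmem⟩ := hs
        obtain ⟨t, ht0, hrep⟩ := extractT (fun j => (a j).toNat) 0 _ hmem
        have hrepZ : (s:ℤ) * a 0 = (t 1 : ℤ) * a 1 + (t 2 : ℤ) * a 2 + (t 3 : ℤ) * a 3 := by
          have h' := congrArg (fun n : ℕ => (n:ℤ)) hrep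
          push_cast [hna 0, hna 1, hna 2, hna 3, ht0] at h'
          linarith
        set v : Fin 4 → ℤ := ![-(s:ℤ), t 1, t 2, t 3] with hvdef
        have hv : v 0 * a 0 + v 1 * a 1 + v 2 * a 2 + v 3 * a 3 = 0 := by
          simp only [hvdef, Matrix.cons_val_zero, Matrix.cons_val_one, Matrix.head_cons,
            Matrix.cons_val_two, Matrix.tail_cons, Matrix.cons_val_three]
          linarith
        obtain ⟨x, y, z, E0, E1, E2, E3⟩ :=
          existsW (d₁₃:ℤ) d₁₄ d₂₁ d₂₄ d₃₁ d₃₂ d₄₂ d₄₃ a u v ha0 ha1 ha2 ha3 hu hv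
        simp only [hvdef, Matrix.cons_val_zero, Matrix.cons_val_one, Matrix.head_cons,
          Matrix.cons_val_two, Matrix.tail_cons, Matrix.cons_val_three] at E0 E1 E2 E3
        have final := keyIneq ((d₂₁:ℤ)+d₃₁) ((d₃₂:ℤ)+d₄₂) ((d₁₃:ℤ)+d₄₃) ((d₁₄:ℤ)+d₂₄)
          d₂₁ d₃₁ d₃₂ d₄₂ d₄₃ d₂₄ x y z (s:ℤ) (t 1) (t 2) (t 3)
          (by linarith) (by linarith) (by linarith) (by linarith) (by linarith) (by linarith)
          rfl rfl (by linarith) (by linarith)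
          (by exact_mod_cast hs0) (by positivity) (by positivity) (by positivity)
          E0 E1 E2 E3
        show d₂₁ + d₃₁ ≤ s
        exact_mod_cast final
  · constructor
    · show -((d₃₂:ℕ)+(d₄₂:ℕ) : ℤ) = _; push_cast; norm_num
    · constructor
      · refine ⟨by show 0 < d₃₂ + d₄₂; omega, ?_⟩
        have hEq : (d₃₂ + d₄₂) * (a 1).toNat = d₂₁ * (a 0).toNat + d₂₄ * (a 3).toNat := by
          have h' : (((d₃₂ + d₄₂) * (a 1).toNat : ℕ) : ℤ)
              = ((d₂₁ * (a 0).toNat + d₂₄ * (a 3).toNat : ℕ) : ℤ) := by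
            push_cast [hna 0, hna 1, hna 3]
            linear_combination ((d₃₂:ℤ)+d₄₂) * ha1 - (d₂₁:ℤ) * ha0 - (d₂₄:ℤ) * ha3
          exact_mod_cast h'
        show (d₃₂ + d₄₂) * (a 1).toNat ∈
          AddSubmonoid.closure {m : ℕ | ∃ j, j ≠ (1 : Fin 4) ∧ m = (a j).toNat}
        rw [hEq]
        refine AddSubmonoid.add_mem _ ?_ ?_
        · simpa [nsmul_eq_mul] using nsmul_mem (AddSubmonoid.subset_closure
            (show (a 0).toNat ∈ {m : ℕ | ∃ j, j ≠ (1 : Fin 4) ∧ m = (a j).toNat} from ⟨0, by decide, rfl⟩)) d₂₁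
        · simpa [nsmul_eq_mul] using nsmul_mem (AddSubmonoid.subset_closure
            (show (a 3).toNat ∈ {m : ℕ | ∃ j, j ≠ (1 : Fin 4) ∧ m = (a j).toNat} from ⟨3, by decide, rfl⟩)) d₂₄
      · intro s hs
        obtain ⟨hs0, hmem⟩ := hs
        obtain ⟨t, ht1, hrep⟩ := extractT (fun j => (a j).toNat) 1 _ hmem
        have hrepZ : (s:ℤ) * a 1 = (t 0 : ℤ) * a 0 + (t 2 : ℤ) * a 2 + (t 3 : ℤ) * a 3 := by
          have h' := congrArg (fun n : ℕ => (n:ℤ)) hrep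
          push_cast [hna 0, hna 1, hna 2, hna 3, ht1] at h'
          linarith
        set v : Fin 4 → ℤ := ![(t 0 : ℤ), -(s:ℤ), t 2, t 3] with hvdef
        have hv : v 0 * a 0 + v 1 * a 1 + v 2 * a 2 + v 3 * a 3 = 0 := by
          simp only [hvdef, Matrix.cons_val_zero, Matrix.cons_val_one, Matrix.head_cons,
            Matrix.cons_val_two, Matrix.tail_cons, Matrix.cons_val_three]
          linarith
        obtain ⟨x, y, z, E0, E1, E2, E3⟩ :=
          existsW (d₁₃:ℤ) d₁₄ d₂₁ d₂₄ d₃₁ d₃₂ d₄₂ d₄₃ a u v ha0 ha1 ha2 ha3 hu hv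
        simp only [hvdef, Matrix.cons_val_zero, Matrix.cons_val_one, Matrix.head_cons,
          Matrix.cons_val_two, Matrix.tail_cons, Matrix.cons_val_three] at E0 E1 E2 E3
        have final := keyIneq ((d₃₂:ℤ)+d₄₂) ((d₁₃:ℤ)+d₄₃) ((d₁₄:ℤ)+d₂₄) ((d₂₁:ℤ)+d₃₁)
          d₃₂ d₄₂ d₄₃ d₁₃ d₁₄ d₃₁ (y-x) (z-x) (-x) (s:ℤ) (t 2) (t 3) (t 0)
          (by linarith) (by linarith) (by linarith) (by linarith) (by linarith) (by linarith)
          rfl (by ring) (by linarith) (by linarith)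
          (by exact_mod_cast hs0) (by positivity) (by positivity) (by positivity)
          (by linear_combination E1) (by linear_combination E2)
          (by linear_combination E3) (by linear_combination E0)
        show d₃₂ + d₄₂ ≤ s
        exact_mod_cast final
  · constructor
    · show -((d₁₃:ℕ)+(d₄₃:ℕ) : ℤ) = _; push_cast; norm_num
    · constructor
      · refine ⟨by show 0 < d₁₃ + d₄₃; omega, ?_⟩
        have hEq : (d₁₃ + d₄₃) * (a 2).toNat = d₃₁ * (a 0).toNat + d₃₂ * (a 1).toNat := by
          have h' : (((d₁₃ + d₄₃) * (a 2).toNat : ℕ) : ℤ)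
              = ((d₃₁ * (a 0).toNat + d₃₂ * (a 1).toNat : ℕ) : ℤ) := by
            push_cast [hna 0, hna 1, hna 2]
            linear_combination ((d₁₃:ℤ)+d₄₃) * ha2 - (d₃₁:ℤ) * ha0 - (d₃₂:ℤ) * ha1
          exact_mod_cast h'
        show (d₁₃ + d₄₃) * (a 2).toNat ∈
          AddSubmonoid.closure {m : ℕ | ∃ j, j ≠ (2 : Fin 4) ∧ m = (a j).toNat}
        rw [hEq]
        refine AddSubmonoid.add_mem _ ?_ ?_
        · simpa [nsmul_eq_mul] using nsmul_mem (AddSubmonoid.subset_closure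
            (show (a 0).toNat ∈ {m : ℕ | ∃ j, j ≠ (2 : Fin 4) ∧ m = (a j).toNat} from ⟨0, by decide, rfl⟩)) d₃₁
        · simpa [nsmul_eq_mul] using nsmul_mem (AddSubmonoid.subset_closure
            (show (a 1).toNat ∈ {m : ℕ | ∃ j, j ≠ (2 : Fin 4) ∧ m = (a j).toNat} from ⟨1, by decide, rfl⟩)) d₃₂
      · intro s hs
        obtain ⟨hs0, hmem⟩ := hs
        obtain ⟨t, ht2, hrep⟩ := extractT (fun j => (a j).toNat) 2 _ hmem
        have hrepZ : (s:ℤ) * a 2 = (t 0 : ℤ) * a 0 + (t 1 : ℤ) * a 1 + (t 3 : ℤ) * a 3 := by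
          have h' := congrArg (fun n : ℕ => (n:ℤ)) hrep
          push_cast [hna 0, hna 1, hna 2, hna 3, ht2] at h'
          linarith
        set v : Fin 4 → ℤ := ![(t 0 : ℤ), (t 1 : ℤ), -(s:ℤ), t 3] with hvdef
        have hv : v 0 * a 0 + v 1 * a 1 + v 2 * a 2 + v 3 * a 3 = 0 := by
          simp only [hvdef, Matrix.cons_val_zero, Matrix.cons_val_one, Matrix.head_cons,
            Matrix.cons_val_two, Matrix.tail_cons, Matrix.cons_val_three]
          linarith
        obtain ⟨x, y, z, E0, E1, E2, E3⟩ :=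
          existsW (d₁₃:ℤ) d₁₄ d₂₁ d₂₄ d₃₁ d₃₂ d₄₂ d₄₃ a u v ha0 ha1 ha2 ha3 hu hv
        simp only [hvdef, Matrix.cons_val_zero, Matrix.cons_val_one, Matrix.head_cons,
          Matrix.cons_val_two, Matrix.tail_cons, Matrix.cons_val_three] at E0 E1 E2 E3
        have final := keyIneq ((d₁₃:ℤ)+d₄₃) ((d₁₄:ℤ)+d₂₄) ((d₂₁:ℤ)+d₃₁) ((d₃₂:ℤ)+d₄₂)
          d₄₃ d₁₃ d₁₄ d₂₄ d₂₁ d₄₂ (z-y) (-y) (x-y) (s:ℤ) (t 3) (t 0) (t 1)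
          (by linarith) (by linarith) (by linarith) (by linarith) (by linarith) (by linarith)
          (by ring) rfl (by linarith) (by linarith)
          (by exact_mod_cast hs0) (by positivity) (by positivity) (by positivity)
          (by linear_combination E2) (by linear_combination E3)
          (by linear_combination E0) (by linear_combination E1)
        show d₁₃ + d₄₃ ≤ s
        exact_mod_cast final
  · constructor
    · show -((d₁₄:ℕ)+(d₂₄:ℕ) : ℤ) = _; push_cast; norm_num
    · constructor
      · refine ⟨by show 0 < d₁₄ + d₂₄; omega, ?_⟩
        have hEq : (d₁₄ + d₂₄) * (a 3).toNat = d₄₂ * (a 1).toNat + d₄₃ * (a 2).toNat := by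
          have h' : (((d₁₄ + d₂₄) * (a 3).toNat : ℕ) : ℤ)
              = ((d₄₂ * (a 1).toNat + d₄₃ * (a 2).toNat : ℕ) : ℤ) := by
            push_cast [hna 1, hna 2, hna 3]
            linear_combination ((d₁₄:ℤ)+d₂₄) * ha3 - (d₄₂:ℤ) * ha1 - (d₄₃:ℤ) * ha2
          exact_mod_cast h'
        show (d₁₄ + d₂₄) * (a 3).toNat ∈
          AddSubmonoid.closure {m : ℕ | ∃ j, j ≠ (3 : Fin 4) ∧ m = (a j).toNat}
        rw [hEq]
        refine AddSubmonoid.add_mem _ ?_ ?_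
        · simpa [nsmul_eq_mul] using nsmul_mem (AddSubmonoid.subset_closure
            (show (a 1).toNat ∈ {m : ℕ | ∃ j, j ≠ (3 : Fin 4) ∧ m = (a j).toNat} from ⟨1, by decide, rfl⟩)) d₄₂
        · simpa [nsmul_eq_mul] using nsmul_mem (AddSubmonoid.subset_closure
            (show (a 2).toNat ∈ {m : ℕ | ∃ j, j ≠ (3 : Fin 4) ∧ m = (a j).toNat} from ⟨2, by decide, rfl⟩)) d₄₃
      · intro s hs
        obtain ⟨hs0, hmem⟩ := hs
        obtain ⟨t, ht3, hrep⟩ := extractT (fun j => (a j).toNat) 3 _ hmem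
        have hrepZ : (s:ℤ) * a 3 = (t 0 : ℤ) * a 0 + (t 1 : ℤ) * a 1 + (t 2 : ℤ) * a 2 := by
          have h' := congrArg (fun n : ℕ => (n:ℤ)) hrep
          push_cast [hna 0, hna 1, hna 2, hna 3, ht3] at h'
          linarith
        set v : Fin 4 → ℤ := ![(t 0 : ℤ), (t 1 : ℤ), (t 2 : ℤ), -(s:ℤ)] with hvdef
        have hv : v 0 * a 0 + v 1 * a 1 + v 2 * a 2 + v 3 * a 3 = 0 := by
          simp only [hvdef, Matrix.cons_val_zero, Matrix.cons_val_one, Matrix.head_cons,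
            Matrix.cons_val_two, Matrix.tail_cons, Matrix.cons_val_three]
          linarith
        obtain ⟨x, y, z, E0, E1, E2, E3⟩ :=
          existsW (d₁₃:ℤ) d₁₄ d₂₁ d₂₄ d₃₁ d₃₂ d₄₂ d₄₃ a u v ha0 ha1 ha2 ha3 hu hv
        simp only [hvdef, Matrix.cons_val_zero, Matrix.cons_val_one, Matrix.head_cons,
          Matrix.cons_val_two, Matrix.tail_cons, Matrix.cons_val_three] at E0 E1 E2 E3
        have final := keyIneq ((d₁₄:ℤ)+d₂₄) ((d₂₁:ℤ)+d₃₁) ((d₃₂:ℤ)+d₄₂) ((d₁₃:ℤ)+d₄₃)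
          d₁₄ d₂₄ d₂₁ d₃₁ d₃₂ d₁₃ (-z) (x-z) (y-z) (s:ℤ) (t 0) (t 1) (t 2)
          (by linarith) (by linarith) (by linarith) (by linarith) (by linarith) (by linarith)
          rfl rfl (by linarith) (by linarith)
          (by exact_mod_cast hs0) (by positivity) (by positivity) (by positivity)
          (by linear_combination E3) (by linear_combination E0)
          (by linear_combination E1) (by linear_combination E2)
        show d₁₄ + d₂₄ ≤ s
        exact_mod_cast final
end

section
/- With A and a₁, a₂, a₃, a₄ as in the context, assume gcd(a₁, a₂, a₃, a₄) = 1. Suppose b₁₁ is a positive integer and b₁₂, b₁₃, b₁₄ are nonnegative integers with b₁₁·a₁ = b₁₂·a₂ + b₁₃·a₃ + b₁₄·a₄. Then there exist positive integers x₂, x₃, x₄ such that the row vector (1, x₂, x₃, x₄) multiplied on the left of the matrix M — where M is A with its first row replaced by (−b₁₁, b₁₂, b₁₃, b₁₄) — is zero; consequently b₁₁ = x₂·d₂₁ + x₃·d₃₁ ≥ d₂₁ + d₃₁ = c₁. -/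
theorem stmt5_bez4 (a : Fin 4 → ℤ) (h : Finset.univ.gcd a = 1) :
    ∃ u0 u1 u2 u3 : ℤ, u0 * a 0 + u1 * a 1 + u2 * a 2 + u3 * a 3 = 1 := by
  have bez2 : ∀ x y : ℤ, ∃ u v : ℤ, u * x + v * y = (Int.gcd x y : ℤ) := by
    intro x y
    exact ⟨Int.gcdA x y, Int.gcdB x y, by rw [Int.gcd_eq_gcd_ab x y]; ring⟩
  have h1 : (Finset.univ : Finset (Fin 4)) = {0, 1, 2, 3} := rfl
  rw [h1] at h
  simp only [Finset.gcd_insert, Finset.gcd_singleton, ← Int.abs_eq_normalize,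
    ← Int.coe_gcd] at h
  obtain ⟨u, v, huv⟩ := bez2 (a 0) (Int.gcd (a 1) (Int.gcd (a 2) |a 3|))
  obtain ⟨s, t, hst⟩ := bez2 (a 1) (Int.gcd (a 2) |a 3|)
  obtain ⟨p, q, hpq⟩ := bez2 (a 2) |a 3|
  rcases abs_choice (a 3) with h3 | h3
  · exact ⟨u, v*s, v*t*p, v*t*q, by
      linear_combination huv + v*hst + v*t*hpq + h - (v*t*q)*h3⟩
  · exact ⟨u, v*s, v*t*p, -(v*t*q), by
      linear_combination huv + v*hst + v*t*hpq + h - (v*t*q)*h3⟩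

theorem stmt5_pos (d13 d14 d21 d24 d31 d32 d42 d43 b11 b12 b13 b14 x2 x3 x4 : ℤ)
    (hd13 : 0 < d13) (hd14 : 0 < d14) (hd21 : 0 < d21) (hd24 : 0 < d24)
    (hd31 : 0 < d31) (hd32 : 0 < d32) (hd42 : 0 < d42) (hd43 : 0 < d43)
    (hb11 : 0 < b11) (hb12 : 0 ≤ b12) (hb13 : 0 ≤ b13) (hb14 : 0 ≤ b14)
    (E1 : x2 * d21 + x3 * d31 = b11)
    (E2 : x2 * (d32 + d42) = b12 + x3 * d32 + x4 * d42)
    (E3 : x3 * (d13 + d43) = b13 + x4 * d43)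
    (E4 : x4 * (d14 + d24) = b14 + x2 * d24) :
    0 < x2 ∧ 0 < x3 ∧ 0 < x4 := by
  have C3 : x3 ≤ x2 → x3 ≤ x4 → 0 < x3 := by
    intro h1 h2
    have hda : 0 ≤ (x4 - x3) * d43 := mul_nonneg (by linarith) hd43.le
    have h0 : 0 ≤ x3 := by nlinarith
    rcases h0.lt_or_eq with hp | hp
    · exact hp
    · exfalso
      have hx3 : x3 = 0 := hp.symm
      have hA1 : b13 + x4 * d43 = 0 := by linear_combination (d13 + d43) * hx3 - E3
      have h4 : 0 ≤ x4 := by linarith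
      have hx4 : x4 = 0 := by
        rcases h4.lt_or_eq with h6 | h6
        · exfalso; have := mul_pos h6 hd43; linarith
        · exact h6.symm
      have hA2 : b14 + x2 * d24 = 0 := by linear_combination (d14 + d24) * hx4 - E4
      have hx2n : 0 ≤ x2 := by linarith
      have hx2 : x2 = 0 := by
        rcases hx2n.lt_or_eq with h8 | h8
        · exfalso; have := mul_pos h8 hd24; linarith
        · exact h8.symm
      have hb0 : b11 = 0 := by linear_combination -E1 + d21 * hx2 + d31 * hx3
      linarith
  have C4 : x4 ≤ x2 → x4 ≤ x3 → 0 < x4 := by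
    intro h1 h2
    have hda : 0 ≤ (x2 - x4) * d24 := mul_nonneg (by linarith) hd24.le
    have h0 : 0 ≤ x4 := by nlinarith
    rcases h0.lt_or_eq with hp | hp
    · exact hp
    · exfalso
      have hx4 : x4 = 0 := hp.symm
      have hA2 : b14 + x2 * d24 = 0 := by linear_combination (d14 + d24) * hx4 - E4
      have hx2n : 0 ≤ x2 := by linarith
      have hx2 : x2 = 0 := by
        rcases hx2n.lt_or_eq with h8 | h8
        · exfalso; have := mul_pos h8 hd24; linarith
        · exact h8.symm
      have hA3 : b12 + x3 * d32 = 0 := by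
        linear_combination (d32 + d42) * hx2 - d42 * hx4 - E2
      have hx3n : 0 ≤ x3 := by linarith
      have hx3 : x3 = 0 := by
        rcases hx3n.lt_or_eq with h8 | h8
        · exfalso; have := mul_pos h8 hd32; linarith
        · exact h8.symm
      have hb0 : b11 = 0 := by linear_combination -E1 + d21 * hx2 + d31 * hx3
      linarith
  have C2 : x2 ≤ x3 → x2 ≤ x4 → 0 < x2 := by
    intro h1 h2
    have hda : 0 ≤ (x3 - x2) * d32 := mul_nonneg (by linarith) hd32.le
    have hdb : 0 ≤ (x4 - x2) * d42 := mul_nonneg (by linarith) hd42.le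
    have hsum : b12 + (x3 - x2) * d32 + (x4 - x2) * d42 = 0 := by linear_combination -E2
    have h3 : x3 = x2 := by
      have h9 : (0:ℤ) ≤ x3 - x2 := by linarith
      rcases h9.lt_or_eq with h8 | h8
      · exfalso; have := mul_pos h8 hd32; linarith
      · linarith
    have h4 : x4 = x2 := by
      have h9 : (0:ℤ) ≤ x4 - x2 := by linarith
      rcases h9.lt_or_eq with h8 | h8
      · exfalso; have := mul_pos h8 hd42; linarith
      · linarith
    have := C3 (by linarith) (by linarith)
    linarith
  rcases le_total x2 x3 with h1 | h1
  · rcases le_total x2 x4 with h2 | h2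
    · have := C2 h1 h2; exact ⟨this, by linarith, by linarith⟩
    · have := C4 h2 (by linarith); exact ⟨by linarith, by linarith, this⟩
  · rcases le_total x3 x4 with h2 | h2
    · have := C3 h1 h2; exact ⟨by linarith, this, by linarith⟩
    · have := C4 (by linarith) h2; exact ⟨by linarith, by linarith, this⟩

set_option maxHeartbeats 1000000 in
/-- Any relation of the first entry dominates the principal one: `b₁₁ ≥ c₁`. -/
theorem stmt_5
    (c₁ c₂ c₃ c₄ d₁₃ d₁₄ d₂₁ d₂₄ d₃₁ d₃₂ d₄₂ d₄₃ : ℕ)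
    (hc₁ : 2 ≤ c₁) (hc₂ : 2 ≤ c₂) (hc₃ : 2 ≤ c₃) (hc₄ : 2 ≤ c₄)
    (hd₁₃ : 0 < d₁₃) (hd₁₄ : 0 < d₁₄) (hd₂₁ : 0 < d₂₁) (hd₂₄ : 0 < d₂₄)
    (hd₃₁ : 0 < d₃₁) (hd₃₂ : 0 < d₃₂) (hd₄₂ : 0 < d₄₂) (hd₄₃ : 0 < d₄₃)
    (hcol₁ : c₁ = d₂₁ + d₃₁) (hcol₂ : c₂ = d₃₂ + d₄₂)
    (hcol₃ : c₃ = d₁₃ + d₄₃) (hcol₄ : c₄ = d₁₄ + d₂₄)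
    (A : Matrix (Fin 4) (Fin 4) ℤ)
    (hA : A = !![-(c₁ : ℤ), 0, (d₁₃ : ℤ), (d₁₄ : ℤ);
                 (d₂₁ : ℤ), -(c₂ : ℤ), 0, (d₂₄ : ℤ);
                 (d₃₁ : ℤ), (d₃₂ : ℤ), -(c₃ : ℤ), 0;
                 0, (d₄₂ : ℤ), (d₄₃ : ℤ), -(c₄ : ℤ)])
    (a : Fin 4 → ℤ)
    (ha : ∀ j : Fin 4, a j = (-1) ^ ((j : ℕ) + 1) *
        (A.submatrix (Fin.succAbove 0) (Fin.succAbove j)).det)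
    (hgcd : Finset.univ.gcd a = 1)
    (b₁₁ b₁₂ b₁₃ b₁₄ : ℤ)
    (hb₁₁ : 0 < b₁₁) (hb₁₂ : 0 ≤ b₁₂) (hb₁₃ : 0 ≤ b₁₃) (hb₁₄ : 0 ≤ b₁₄)
    (hrel : b₁₁ * a 0 = b₁₂ * a 1 + b₁₃ * a 2 + b₁₄ * a 3)
    (M : Matrix (Fin 4) (Fin 4) ℤ)
    (hM : M = A.updateRow 0 ![-b₁₁, b₁₂, b₁₃, b₁₄]) :
    ∃ x₂ x₃ x₄ : ℤ, 0 < x₂ ∧ 0 < x₃ ∧ 0 < x₄ ∧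
      Matrix.vecMul ![1, x₂, x₃, x₄] M = 0 ∧
      b₁₁ = x₂ * d₂₁ + x₃ * d₃₁ ∧ (c₁ : ℤ) ≤ b₁₁ := by
  have ea0 : a 0 = (c₂:ℤ)*c₃*c₄ - d₂₄*d₃₂*d₄₃ - d₂₄*d₄₂*c₃ := by
    rw [ha 0, hA, show (!![-(c₁ : ℤ), 0, (d₁₃ : ℤ), (d₁₄ : ℤ); (d₂₁ : ℤ), -(c₂ : ℤ), 0, (d₂₄ : ℤ);
        (d₃₁ : ℤ), (d₃₂ : ℤ), -(c₃ : ℤ), 0; 0, (d₄₂ : ℤ), (d₄₃ : ℤ), -(c₄ : ℤ)]).submatrix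
        (Fin.succAbove 0) (Fin.succAbove 0) =
        !![-(c₂:ℤ), 0, (d₂₄:ℤ); (d₃₂:ℤ), -(c₃:ℤ), 0; (d₄₂:ℤ), (d₄₃:ℤ), -(c₄:ℤ)] from by
      ext i k; fin_cases i <;> fin_cases k <;> rfl]
    simp [Matrix.det_fin_three]; try ring
  have ea1 : a 1 = (d₂₁:ℤ)*c₃*c₄ + d₂₄*d₃₁*d₄₃ := by
    rw [ha 1, hA, show (!![-(c₁ : ℤ), 0, (d₁₃ : ℤ), (d₁₄ : ℤ); (d₂₁ : ℤ), -(c₂ : ℤ), 0, (d₂₄ : ℤ);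
        (d₃₁ : ℤ), (d₃₂ : ℤ), -(c₃ : ℤ), 0; 0, (d₄₂ : ℤ), (d₄₃ : ℤ), -(c₄ : ℤ)]).submatrix
        (Fin.succAbove 0) (Fin.succAbove 1) =
        !![(d₂₁:ℤ), 0, (d₂₄:ℤ); (d₃₁:ℤ), -(c₃:ℤ), 0; 0, (d₄₃:ℤ), -(c₄:ℤ)] from by
      ext i k; fin_cases i <;> fin_cases k <;> rfl]
    simp [Matrix.det_fin_three]; try ring
  have ea2 : a 2 = (d₂₁:ℤ)*d₃₂*c₄ + c₂*d₃₁*c₄ - d₂₄*d₃₁*d₄₂ := by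
    rw [ha 2, hA, show (!![-(c₁ : ℤ), 0, (d₁₃ : ℤ), (d₁₄ : ℤ); (d₂₁ : ℤ), -(c₂ : ℤ), 0, (d₂₄ : ℤ);
        (d₃₁ : ℤ), (d₃₂ : ℤ), -(c₃ : ℤ), 0; 0, (d₄₂ : ℤ), (d₄₃ : ℤ), -(c₄ : ℤ)]).submatrix
        (Fin.succAbove 0) (Fin.succAbove 2) =
        !![(d₂₁:ℤ), -(c₂:ℤ), (d₂₄:ℤ); (d₃₁:ℤ), (d₃₂:ℤ), 0; 0, (d₄₂:ℤ), -(c₄:ℤ)] from by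
      ext i k; fin_cases i <;> fin_cases k <;> rfl]
    simp [Matrix.det_fin_three]; try ring
  have ea3 : a 3 = (d₂₁:ℤ)*d₃₂*d₄₃ + d₂₁*c₃*d₄₂ + c₂*d₃₁*d₄₃ := by
    rw [ha 3, hA, show (!![-(c₁ : ℤ), 0, (d₁₃ : ℤ), (d₁₄ : ℤ); (d₂₁ : ℤ), -(c₂ : ℤ), 0, (d₂₄ : ℤ);
        (d₃₁ : ℤ), (d₃₂ : ℤ), -(c₃ : ℤ), 0; 0, (d₄₂ : ℤ), (d₄₃ : ℤ), -(c₄ : ℤ)]).submatrix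
        (Fin.succAbove 0) (Fin.succAbove 3) =
        !![(d₂₁:ℤ), -(c₂:ℤ), 0; (d₃₁:ℤ), (d₃₂:ℤ), -(c₃:ℤ); 0, (d₄₂:ℤ), (d₄₃:ℤ)] from by
      ext i k; fin_cases i <;> fin_cases k <;> rfl]
    simp [Matrix.det_fin_three, show ((3:Fin 4):ℕ) = 3 from rfl]; try ring
  have hrel' : b₁₁ * ((c₂:ℤ)*c₃*c₄ - d₂₄*d₃₂*d₄₃ - d₂₄*d₄₂*c₃) = b₁₂ * ((d₂₁:ℤ)*c₃*c₄ + d₂₄*d₃₁*d₄₃) + b₁₃ * ((d₂₁:ℤ)*d₃₂*c₄ + c₂*d₃₁*c₄ - d₂₄*d₃₁*d₄₂) + b₁₄ * ((d₂₁:ℤ)*d₃₂*d₄₃ + d₂₁*c₃*d₄₂ + c₂*d₃₁*d₄₃) := by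
    rw [← ea0, ← ea1, ← ea2, ← ea3]; exact hrel
  obtain ⟨u0, u1, u2, u3, hbezA⟩ := stmt5_bez4 a hgcd
  rw [ea0, ea1, ea2, ea3] at hbezA
  obtain ⟨x2, hx2⟩ : ∃ x : ℤ, x = u0*(-((-b₁₂)*((-(c₃:ℤ))*(-(c₄:ℤ))-0*(d₄₃:ℤ)) - (-b₁₃)*((d₃₂:ℤ)*(-(c₄:ℤ))-0*(d₄₂:ℤ)) + (-b₁₄)*((d₃₂:ℤ)*(d₄₃:ℤ)-(-(c₃:ℤ))*(d₄₂:ℤ)))) + u1*((b₁₁*((-(c₃:ℤ))*(-(c₄:ℤ))-0*(d₄₃:ℤ)) - (-b₁₃)*((d₃₁:ℤ)*(-(c₄:ℤ))-0*0) + (-b₁₄)*((d₃₁:ℤ)*(d₄₃:ℤ)-(-(c₃:ℤ))*0))) + u2*(-(b₁₁*((d₃₂:ℤ)*(-(c₄:ℤ))-0*(d₄₂:ℤ)) - (-b₁₂)*((d₃₁:ℤ)*(-(c₄:ℤ))-0*0) + (-b₁₄)*((d₃₁:ℤ)*(d₄₂:ℤ)-(d₃₂:ℤ)*0))) + u3*((b₁₁*((d₃₂:ℤ)*(d₄₃:ℤ)-(-(c₃:ℤ))*(d₄₂:ℤ))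 - (-b₁₂)*((d₃₁:ℤ)*(d₄₃:ℤ)-(-(c₃:ℤ))*0) + (-b₁₃)*((d₃₁:ℤ)*(d₄₂:ℤ)-(d₃₂:ℤ)*0))) := ⟨_, rfl⟩
  obtain ⟨x3, hx3⟩ : ∃ x : ℤ, x = u0*(-((-(c₂:ℤ))*((-b₁₃)*(-(c₄:ℤ))-(-b₁₄)*(d₄₃:ℤ)) - 0*((-b₁₂)*(-(c₄:ℤ))-(-b₁₄)*(d₄₂:ℤ)) + (d₂₄:ℤ)*((-b₁₂)*(d₄₃:ℤ)-(-b₁₃)*(d₄₂:ℤ)))) + u1*(((d₂₁:ℤ)*((-b₁₃)*(-(c₄:ℤ))-(-b₁₄)*(d₄₃:ℤ)) - 0*(b₁₁*(-(c₄:ℤ))-(-b₁₄)*0) + (d₂₄:ℤ)*(b₁₁*(d₄₃:ℤ)-(-b₁₃)*0))) + u2*(-((d₂₁:ℤ)*((-b₁₂)*(-(c₄:ℤ))-(-b₁₄)*(d₄₂:ℤ)) - (-(c₂:ℤ))*(b₁₁*(-(c₄:ℤ))-(-b₁₄)*0) + (d₂₄:ℤ)*(b₁₁*(d₄₂:ℤ)-(-b₁₂)*0)))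 + u3*(((d₂₁:ℤ)*((-b₁₂)*(d₄₃:ℤ)-(-b₁₃)*(d₄₂:ℤ)) - (-(c₂:ℤ))*(b₁₁*(d₄₃:ℤ)-(-b₁₃)*0) + 0*(b₁₁*(d₄₂:ℤ)-(-b₁₂)*0))) := ⟨_, rfl⟩
  obtain ⟨x4, hx4⟩ : ∃ x : ℤ, x = u0*(-((-(c₂:ℤ))*((-(c₃:ℤ))*(-b₁₄)-0*(-b₁₃)) - 0*((d₃₂:ℤ)*(-b₁₄)-0*(-b₁₂)) + (d₂₄:ℤ)*((d₃₂:ℤ)*(-b₁₃)-(-(c₃:ℤ))*(-b₁₂)))) + u1*(((d₂₁:ℤ)*((-(c₃:ℤ))*(-b₁₄)-0*(-b₁₃)) - 0*((d₃₁:ℤ)*(-b₁₄)-0*b₁₁) + (d₂₄:ℤ)*((d₃₁:ℤ)*(-b₁₃)-(-(c₃:ℤ))*b₁₁))) + u2*(-((d₂₁:ℤ)*((d₃₂:ℤ)*(-b₁₄)-0*(-b₁₂)) - (-(c₂:ℤ))*((d₃₁:ℤ)*(-b₁₄)-0*b₁₁) + (d₂₄:ℤ)*((d₃₁:ℤ)*(-b₁₂)-(d₃₂:ℤ)*b₁₁)))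 + u3*(((d₂₁:ℤ)*((d₃₂:ℤ)*(-b₁₃)-(-(c₃:ℤ))*(-b₁₂)) - (-(c₂:ℤ))*((d₃₁:ℤ)*(-b₁₃)-(-(c₃:ℤ))*b₁₁) + 0*((d₃₁:ℤ)*(-b₁₂)-(d₃₂:ℤ)*b₁₁))) := ⟨_, rfl⟩
  have E1 : x2 * (d₂₁:ℤ) + x3 * (d₃₁:ℤ) = b₁₁ := by
    linear_combination (d₂₁:ℤ) * hx2 + (d₃₁:ℤ) * hx3 + b₁₁ * hbezA - u0 * hrel'
  have E2 : x2 * (c₂:ℤ) = b₁₂ + x3 * (d₃₂:ℤ) + x4 * (d₄₂:ℤ) := by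
    linear_combination (c₂:ℤ) * hx2 - (d₃₂:ℤ) * hx3 - (d₄₂:ℤ) * hx4 + b₁₂ * hbezA + u1 * hrel'
  have E3 : x3 * (c₃:ℤ) = b₁₃ + x4 * (d₄₃:ℤ) := by
    linear_combination (c₃:ℤ) * hx3 - (d₄₃:ℤ) * hx4 + b₁₃ * hbezA + u2 * hrel'
  have E4 : x4 * (c₄:ℤ) = b₁₄ + x2 * (d₂₄:ℤ) := by
    linear_combination (c₄:ℤ) * hx4 - (d₂₄:ℤ) * hx2 + b₁₄ * hbezA + u3 * hrel'
  have hc1' : (c₁:ℤ) = (d₂₁:ℤ) + (d₃₁:ℤ) := by exact_mod_cast congrArg (Nat.cast : ℕ → ℤ) hcol₁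
  have hc2' : (c₂:ℤ) = (d₃₂:ℤ) + (d₄₂:ℤ) := by exact_mod_cast congrArg (Nat.cast : ℕ → ℤ) hcol₂
  have hc3' : (c₃:ℤ) = (d₁₃:ℤ) + (d₄₃:ℤ) := by exact_mod_cast congrArg (Nat.cast : ℕ → ℤ) hcol₃
  have hc4' : (c₄:ℤ) = (d₁₄:ℤ) + (d₂₄:ℤ) := by exact_mod_cast congrArg (Nat.cast : ℕ → ℤ) hcol₄
  obtain ⟨hp2, hp3, hp4⟩ := stmt5_pos (d₁₃:ℤ) (d₁₄:ℤ) (d₂₁:ℤ) (d₂₄:ℤ) (d₃₁:ℤ) (d₃₂:ℤ)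
    (d₄₂:ℤ) (d₄₃:ℤ) b₁₁ b₁₂ b₁₃ b₁₄ x2 x3 x4
    (by exact_mod_cast hd₁₃) (by exact_mod_cast hd₁₄) (by exact_mod_cast hd₂₁)
    (by exact_mod_cast hd₂₄) (by exact_mod_cast hd₃₁) (by exact_mod_cast hd₃₂)
    (by exact_mod_cast hd₄₂) (by exact_mod_cast hd₄₃)
    hb₁₁ hb₁₂ hb₁₃ hb₁₄ E1 (by rw [← hc2']; exact E2) (by rw [← hc3']; exact E3)
    (by rw [← hc4']; exact E4)
  clear hx2 hx3 hx4 hbezA hrel' hrel ha hgcd ea0 ea1 ea2 ea3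
  refine ⟨x2, x3, x4, hp2, hp3, hp4, ?_, E1.symm, ?_⟩
  · have hMe : M = !![-b₁₁, b₁₂, b₁₃, b₁₄;
        (d₂₁:ℤ), -(c₂:ℤ), 0, (d₂₄:ℤ);
        (d₃₁:ℤ), (d₃₂:ℤ), -(c₃:ℤ), 0;
        0, (d₄₂:ℤ), (d₄₃:ℤ), -(c₄:ℤ)] := by
      rw [hM, hA]; ext i k; fin_cases i <;> fin_cases k <;>
        simp [Matrix.updateRow_apply]
    rw [hMe]
    funext k
    fin_cases k <;>
      simp [Matrix.vecMul, dotProduct, Fin.sum_univ_four] <;> linarith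
  · have h12 : (1:ℤ) ≤ x2 := hp2
    have h13 : (1:ℤ) ≤ x3 := hp3
    have m1 : (1:ℤ) * (d₂₁:ℤ) ≤ x2 * (d₂₁:ℤ) :=
      mul_le_mul_of_nonneg_right h12 (by positivity)
    have m2 : (1:ℤ) * (d₃₁:ℤ) ≤ x3 * (d₃₁:ℤ) :=
      mul_le_mul_of_nonneg_right h13 (by positivity)
    linarith [E1, hc1']
end

section
/- With A, a = (a₁, a₂, a₃, a₄), u, and A_t as in the context: u₁ = u₃, each column of A_t sums to zero for every t, and for every integer t ≥ 0 one has A_t·(a + t·u)ᵀ = 0, i.e. the rows of A_t are relations of the translated sequence a + t·u. -/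
set_option maxHeartbeats 1000000 in

/-- Properties of the translation vector `u` and the translated matrices `A_t`. -/
theorem stmt_6
    (c₁ c₂ c₃ c₄ d₁₃ d₁₄ d₂₁ d₂₄ d₃₁ d₃₂ d₄₂ d₄₃ : ℕ)
    (hc₁ : 2 ≤ c₁) (hc₂ : 2 ≤ c₂) (hc₃ : 2 ≤ c₃) (hc₄ : 2 ≤ c₄)
    (hd₁₃ : 0 < d₁₃) (hd₁₄ : 0 < d₁₄) (hd₂₁ : 0 < d₂₁) (hd₂₄ : 0 < d₂₄)
    (hd₃₁ : 0 < d₃₁) (hd₃₂ : 0 < d₃₂) (hd₄₂ : 0 < d₄₂) (hd₄₃ : 0 < d₄₃)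
    (hcol₁ : c₁ = d₂₁ + d₃₁) (hcol₂ : c₂ = d₃₂ + d₄₂)
    (hcol₃ : c₃ = d₁₃ + d₄₃) (hcol₄ : c₄ = d₁₄ + d₂₄)
    (A : Matrix (Fin 4) (Fin 4) ℤ)
    (hA : A = !![-(c₁ : ℤ), 0, (d₁₃ : ℤ), (d₁₄ : ℤ);
                 (d₂₁ : ℤ), -(c₂ : ℤ), 0, (d₂₄ : ℤ);
                 (d₃₁ : ℤ), (d₃₂ : ℤ), -(c₃ : ℤ), 0;
                 0, (d₄₂ : ℤ), (d₄₃ : ℤ), -(c₄ : ℤ)])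
    (a : Fin 4 → ℤ)
    (ha : ∀ j : Fin 4, a j = (-1) ^ ((j : ℕ) + 1) *
        (A.submatrix (Fin.succAbove 0) (Fin.succAbove j)).det)
    (U : Matrix (Fin 3) (Fin 4) ℤ)
    (hU : U = !![(d₂₁ : ℤ), -(c₂ : ℤ), 0, (d₂₄ : ℤ);
                 1, 0, -1, 0;
                 0, (d₄₂ : ℤ), (d₄₃ : ℤ), -(c₄ : ℤ)])
    (u : Fin 4 → ℤ)
    (hu : ∀ j : Fin 4, u j = (-1) ^ ((j : ℕ) + 1) *
        (U.submatrix id (Fin.succAbove j)).det)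
    (At : ℤ → Matrix (Fin 4) (Fin 4) ℤ)
    (hAt : ∀ t : ℤ, At t = !![-(c₁ : ℤ) - t, 0, (d₁₃ : ℤ) + t, (d₁₄ : ℤ);
                 (d₂₁ : ℤ), -(c₂ : ℤ), 0, (d₂₄ : ℤ);
                 (d₃₁ : ℤ) + t, (d₃₂ : ℤ), -(c₃ : ℤ) - t, 0;
                 0, (d₄₂ : ℤ), (d₄₃ : ℤ), -(c₄ : ℤ)])
    :
    u 0 = u 2 ∧
    (∀ t : ℤ, ∀ j : Fin 4, ∑ i : Fin 4, At t i j = 0) ∧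
    (∀ t : ℤ, 0 ≤ t → (At t).mulVec (fun j => a j + t * u j) = 0) := by
  subst hcol₁ hcol₂ hcol₃ hcol₄
  have ha0 := ha 0
  have ha1 := ha 1
  have ha2 := ha 2
  have ha3 := ha 3
  simp [hA, Matrix.det_fin_three, Fin.succAbove, Fin.lt_def, show ((3:Fin 4):ℕ)=3 from rfl, show (Fin.castSucc 2 : Fin 4)=2 from rfl] at ha0 ha1 ha2 ha3
  have hu0 := hu 0
  have hu1 := hu 1
  have hu2 := hu 2
  have hu3 := hu 3
  simp [hU, Matrix.det_fin_three, Fin.succAbove, Fin.lt_def, show ((3:Fin 4):ℕ)=3 from rfl, show (Fin.castSucc 2 : Fin 4)=2 from rfl] at hu0 hu1 hu2 hu3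
  refine ⟨?_, ?_, ?_⟩
  · rw [hu0, hu2]; push_cast; ring
  · intro t j
    fin_cases j <;>
      simp [hAt, Fin.sum_univ_four] <;> push_cast <;> ring
  · intro t ht
    funext j
    fin_cases j <;>
      simp [hAt, Matrix.mulVec, dotProduct, Fin.sum_univ_four, ha0, ha1, ha2, ha3,
        hu0, hu1, hu2, hu3] <;> push_cast <;> ring
end

section
/- With A, a = (a₁, a₂, a₃, a₄), v, and B_t as in the context: v₂ = v₄, each column of B_t sums to zero for every t, and for every integer t ≥ 0 one has B_t·(a + t·v)ᵀ = 0, i.e. the rows of B_t are relations of the translated sequence a + t·v. -/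
/-- Properties of the translation vector `v` and the translated matrices `B_t`. -/
theorem stmt_7
    (c₁ c₂ c₃ c₄ d₁₃ d₁₄ d₂₁ d₂₄ d₃₁ d₃₂ d₄₂ d₄₃ : ℕ)
    (hc₁ : 2 ≤ c₁) (hc₂ : 2 ≤ c₂) (hc₃ : 2 ≤ c₃) (hc₄ : 2 ≤ c₄)
    (hd₁₃ : 0 < d₁₃) (hd₁₄ : 0 < d₁₄) (hd₂₁ : 0 < d₂₁) (hd₂₄ : 0 < d₂₄)
    (hd₃₁ : 0 < d₃₁) (hd₃₂ : 0 < d₃₂) (hd₄₂ : 0 < d₄₂) (hd₄₃ : 0 < d₄₃)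
    (hcol₁ : c₁ = d₂₁ + d₃₁) (hcol₂ : c₂ = d₃₂ + d₄₂)
    (hcol₃ : c₃ = d₁₃ + d₄₃) (hcol₄ : c₄ = d₁₄ + d₂₄)
    (A : Matrix (Fin 4) (Fin 4) ℤ)
    (hA : A = !![-(c₁ : ℤ), 0, (d₁₃ : ℤ), (d₁₄ : ℤ);
                 (d₂₁ : ℤ), -(c₂ : ℤ), 0, (d₂₄ : ℤ);
                 (d₃₁ : ℤ), (d₃₂ : ℤ), -(c₃ : ℤ), 0;
                 0, (d₄₂ : ℤ), (d₄₃ : ℤ), -(c₄ : ℤ)])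
    (a : Fin 4 → ℤ)
    (ha : ∀ j : Fin 4, a j = (-1) ^ ((j : ℕ) + 1) *
        (A.submatrix (Fin.succAbove 0) (Fin.succAbove j)).det)
    (V : Matrix (Fin 3) (Fin 4) ℤ)
    (hV : V = !![-(c₁ : ℤ), 0, (d₁₃ : ℤ), (d₁₄ : ℤ);
                 0, -1, 0, 1;
                 (d₃₁ : ℤ), (d₃₂ : ℤ), -(c₃ : ℤ), 0])
    (v : Fin 4 → ℤ)
    (hv : ∀ j : Fin 4, v j = (-1) ^ ((j : ℕ)) *
        (V.submatrix id (Fin.succAbove j)).det)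
    (Bt : ℤ → Matrix (Fin 4) (Fin 4) ℤ)
    (hBt : ∀ t : ℤ, Bt t = !![-(c₁ : ℤ), 0, (d₁₃ : ℤ), (d₁₄ : ℤ);
                 (d₂₁ : ℤ), -(c₂ : ℤ) - t, 0, (d₂₄ : ℤ) + t;
                 (d₃₁ : ℤ), (d₃₂ : ℤ), -(c₃ : ℤ), 0;
                 0, (d₄₂ : ℤ) + t, (d₄₃ : ℤ), -(c₄ : ℤ) - t])
    :
    v 1 = v 3 ∧
    (∀ t : ℤ, ∀ j : Fin 4, ∑ i : Fin 4, Bt t i j = 0) ∧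
    (∀ t : ℤ, 0 ≤ t → (Bt t).mulVec (fun j => a j + t * v j) = 0) := by

  subst hA hV
  have ha0 := ha 0; have ha1 := ha 1; have ha2 := ha 2; have ha3 := ha 3
  have hv0 := hv 0; have hv1 := hv 1; have hv2 := hv 2; have hv3 := hv 3
  simp [Matrix.det_fin_three, Fin.succAbove, Fin.sum_univ_succ, Matrix.submatrix, Fin.lt_def,
    Matrix.of_apply, Matrix.cons_val', Matrix.cons_val_zero, Matrix.cons_val_one, Matrix.head_cons,
    Matrix.head_fin_const, show ((3:Fin 4):ℕ)=3 from rfl, show (Fin.castSucc 2 : Fin 4) = 2 from rfl, show (Fin.succ 2 : Fin 4) = 3 from rfl] at ha0 ha1 ha2 ha3 hv0 hv1 hv2 hv3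
  refine ⟨?_, ?_, ?_⟩
  · rw [hv1, hv3]
  · intro t j
    rw [hBt]
    fin_cases j <;>
      simp [Fin.sum_univ_succ] <;> push_cast [hcol₁, hcol₂, hcol₃, hcol₄] <;> ring
  · intro t ht
    rw [hBt]
    funext i
    fin_cases i <;>
      · simp [Matrix.mulVec, dotProduct, Fin.sum_univ_succ, show (Fin.succ 2 : Fin 4) = 3 from rfl, ha0, ha1, ha2, ha3, hv0, hv1, hv2, hv3]
        push_cast [hcol₁, hcol₂, hcol₃, hcol₄]
        ring
end

section
/- With A as in the context, let a, x, y, z be positive integers and suppose A·(a, a+x, a+y, a+z)ᵀ = 0. If the entries of row 2 of A sum to zero (c₂ = d₂₁ + d₂₄), then c₂·x = d₂₄·z and consequently x < z. If moreover the entries of row 4 of A also sum to zero (c₄ = d₄₂ + d₄₃), then d₄₂·x + d₄₃·y = c₄·z, d₄₃·(y − z) = d₄₂·(z − x), and consequently x < z < y. -/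
set_option maxHeartbeats 1600000 in
/-- Row-sum conditions force `x < z` and `x < z < y`. -/
theorem stmt_11
    (c₁ c₂ c₃ c₄ d₁₃ d₁₄ d₂₁ d₂₄ d₃₁ d₃₂ d₄₂ d₄₃ : ℕ)
    (hc₁ : 2 ≤ c₁) (hc₂ : 2 ≤ c₂) (hc₃ : 2 ≤ c₃) (hc₄ : 2 ≤ c₄)
    (hd₁₃ : 0 < d₁₃) (hd₁₄ : 0 < d₁₄) (hd₂₁ : 0 < d₂₁) (hd₂₄ : 0 < d₂₄)
    (hd₃₁ : 0 < d₃₁) (hd₃₂ : 0 < d₃₂) (hd₄₂ : 0 < d₄₂) (hd₄₃ : 0 < d₄₃)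
    (hcol₁ : c₁ = d₂₁ + d₃₁) (hcol₂ : c₂ = d₃₂ + d₄₂)
    (hcol₃ : c₃ = d₁₃ + d₄₃) (hcol₄ : c₄ = d₁₄ + d₂₄)
    (A : Matrix (Fin 4) (Fin 4) ℤ)
    (hA : A = !![-(c₁ : ℤ), 0, (d₁₃ : ℤ), (d₁₄ : ℤ);
                 (d₂₁ : ℤ), -(c₂ : ℤ), 0, (d₂₄ : ℤ);
                 (d₃₁ : ℤ), (d₃₂ : ℤ), -(c₃ : ℤ), 0;
                 0, (d₄₂ : ℤ), (d₄₃ : ℤ), -(c₄ : ℤ)])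
    (a x y z : ℤ) (hapos : 0 < a) (hxpos : 0 < x) (hypos : 0 < y) (hzpos : 0 < z)
    (hrel : A.mulVec ![a, a + x, a + y, a + z] = 0) :
    (c₂ = d₂₁ + d₂₄ → (c₂ : ℤ) * x = (d₂₄ : ℤ) * z ∧ x < z) ∧
    (c₂ = d₂₁ + d₂₄ → c₄ = d₄₂ + d₄₃ →
      (d₄₂ : ℤ) * x + (d₄₃ : ℤ) * y = (c₄ : ℤ) * z ∧
      (d₄₃ : ℤ) * (y - z) = (d₄₂ : ℤ) * (z - x) ∧
      x < z ∧ z < y) := by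
  subst hA
  have eq2 := congrFun hrel 1
  have eq4 := congrFun hrel 3
  simp [Matrix.mulVec, dotProduct, Fin.sum_univ_four] at eq2 eq4
  have hd21 : (0:ℤ) < d₂₁ := by exact_mod_cast hd₂₁
  have hd24 : (0:ℤ) < d₂₄ := by exact_mod_cast hd₂₄
  have hd42 : (0:ℤ) < d₄₂ := by exact_mod_cast hd₄₂
  have hd43 : (0:ℤ) < d₄₃ := by exact_mod_cast hd₄₃
  constructor
  · intro h2
    have h2' : (c₂ : ℤ) = d₂₁ + d₂₄ := by exact_mod_cast h2
    have heq : (c₂ : ℤ) * x = (d₂₄ : ℤ) * z := by linear_combination -eq2 - a * h2'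
    refine ⟨heq, ?_⟩
    nlinarith [mul_pos hd21 hxpos, heq, h2']
  · intro h2 h4
    have h2' : (c₂ : ℤ) = d₂₁ + d₂₄ := by exact_mod_cast h2
    have h4' : (c₄ : ℤ) = d₄₂ + d₄₃ := by exact_mod_cast h4
    have heq : (c₂ : ℤ) * x = (d₂₄ : ℤ) * z := by linear_combination -eq2 - a * h2'
    have hxz : x < z := by nlinarith [mul_pos hd21 hxpos, heq, h2']
    have heq4 : (d₄₂ : ℤ) * x + (d₄₃ : ℤ) * y = (c₄ : ℤ) * z := by
      linear_combination eq4 + a * h4'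
    have heq4' : (d₄₃ : ℤ) * (y - z) = (d₄₂ : ℤ) * (z - x) := by
      linear_combination heq4 + z * h4'
    refine ⟨heq4, heq4', hxz, ?_⟩
    nlinarith [mul_pos hd42 (sub_pos.2 hxz), heq4']
end

section
/- With A and u as in the context, suppose the entries of row 2 of A sum to zero (c₂ = d₂₁ + d₂₄) and the entries of row 4 of A sum to zero (c₄ = d₄₂ + d₄₃). Then u = b·(1, 1, 1, 1), where b = d₂₁·c₄ + d₂₄·d₄₃. -/
/-- When rows 2 and 4 of `A` sum to zero, the translation vector `u` is
`b·(1,1,1,1)` with `b = d₂₁c₄ + d₂₄d₄₃`. -/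
theorem stmt_12
    (c₁ c₂ c₃ c₄ d₁₃ d₁₄ d₂₁ d₂₄ d₃₁ d₃₂ d₄₂ d₄₃ : ℕ)
    (hc₁ : 2 ≤ c₁) (hc₂ : 2 ≤ c₂) (hc₃ : 2 ≤ c₃) (hc₄ : 2 ≤ c₄)
    (hd₁₃ : 0 < d₁₃) (hd₁₄ : 0 < d₁₄) (hd₂₁ : 0 < d₂₁) (hd₂₄ : 0 < d₂₄)
    (hd₃₁ : 0 < d₃₁) (hd₃₂ : 0 < d₃₂) (hd₄₂ : 0 < d₄₂) (hd₄₃ : 0 < d₄₃)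
    (hcol₁ : c₁ = d₂₁ + d₃₁) (hcol₂ : c₂ = d₃₂ + d₄₂)
    (hcol₃ : c₃ = d₁₃ + d₄₃) (hcol₄ : c₄ = d₁₄ + d₂₄)
    (A : Matrix (Fin 4) (Fin 4) ℤ)
    (hA : A = !![-(c₁ : ℤ), 0, (d₁₃ : ℤ), (d₁₄ : ℤ);
                 (d₂₁ : ℤ), -(c₂ : ℤ), 0, (d₂₄ : ℤ);
                 (d₃₁ : ℤ), (d₃₂ : ℤ), -(c₃ : ℤ), 0;
                 0, (d₄₂ : ℤ), (d₄₃ : ℤ), -(c₄ : ℤ)])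
    (U : Matrix (Fin 3) (Fin 4) ℤ)
    (hU : U = !![(d₂₁ : ℤ), -(c₂ : ℤ), 0, (d₂₄ : ℤ);
                 1, 0, -1, 0;
                 0, (d₄₂ : ℤ), (d₄₃ : ℤ), -(c₄ : ℤ)])
    (u : Fin 4 → ℤ)
    (hu : ∀ j : Fin 4, u j = (-1) ^ ((j : ℕ) + 1) *
        (U.submatrix id (Fin.succAbove j)).det)
    (hrow2 : c₂ = d₂₁ + d₂₄) (hrow4 : c₄ = d₄₂ + d₄₃) :
    ∀ j : Fin 4, u j = (d₂₁ : ℤ) * (c₄ : ℤ) + (d₂₄ : ℤ) * (d₄₃ : ℤ) := by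
  intro j
  subst hU hrow2 hrow4
  fin_cases j <;>
  · rw [hu]
    simp +decide [Matrix.det_fin_three, Fin.succAbove, Matrix.submatrix, Fin.lt_def,
      show (Fin.castSucc 2 : Fin 4) = 2 from rfl, show (Fin.castSucc 1 : Fin 4) = 1 from rfl,
      show (Fin.castSucc 0 : Fin 4) = 0 from rfl, show (Fin.succ 2 : Fin 4) = 3 from rfl]
    ring
end

section
/- With A as in the context, let a, x, y, z be positive integers such that A·(a, a+x, a+y, a+z)ᵀ = 0, and suppose the entries of rows 2 and 4 of A each sum to zero (c₂ = d₂₁ + d₂₄ and c₄ = d₄₂ + d₄₃). Set d = gcd(x, z) and b = d₂₁·c₄ + d₂₄·d₄₃. Then there exists a positive integer q such that c₂ = q·(z/d) and d₂₄ = q·(x/d); moreover d divides d₄₃·y and q·d₄₃·y = d·b. -/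
/-- Arithmetic consequences of rows 2 and 4 summing to zero. -/
theorem stmt_13
    (c₁ c₂ c₃ c₄ d₁₃ d₁₄ d₂₁ d₂₄ d₃₁ d₃₂ d₄₂ d₄₃ : ℕ)
    (hc₁ : 2 ≤ c₁) (hc₂ : 2 ≤ c₂) (hc₃ : 2 ≤ c₃) (hc₄ : 2 ≤ c₄)
    (hd₁₃ : 0 < d₁₃) (hd₁₄ : 0 < d₁₄) (hd₂₁ : 0 < d₂₁) (hd₂₄ : 0 < d₂₄)
    (hd₃₁ : 0 < d₃₁) (hd₃₂ : 0 < d₃₂) (hd₄₂ : 0 < d₄₂) (hd₄₃ : 0 < d₄₃)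
    (hcol₁ : c₁ = d₂₁ + d₃₁) (hcol₂ : c₂ = d₃₂ + d₄₂)
    (hcol₃ : c₃ = d₁₃ + d₄₃) (hcol₄ : c₄ = d₁₄ + d₂₄)
    (A : Matrix (Fin 4) (Fin 4) ℤ)
    (hA : A = !![-(c₁ : ℤ), 0, (d₁₃ : ℤ), (d₁₄ : ℤ);
                 (d₂₁ : ℤ), -(c₂ : ℤ), 0, (d₂₄ : ℤ);
                 (d₃₁ : ℤ), (d₃₂ : ℤ), -(c₃ : ℤ), 0;
                 0, (d₄₂ : ℤ), (d₄₃ : ℤ), -(c₄ : ℤ)])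
    (a x y z : ℤ) (hapos : 0 < a) (hxpos : 0 < x) (hypos : 0 < y) (hzpos : 0 < z)
    (hrel : A.mulVec ![a, a + x, a + y, a + z] = 0)
    (hrow2 : c₂ = d₂₁ + d₂₄) (hrow4 : c₄ = d₄₂ + d₄₃)
    (d : ℕ) (hd : d = Int.gcd x z)
    (b : ℤ) (hb : b = (d₂₁ : ℤ) * (c₄ : ℤ) + (d₂₄ : ℤ) * (d₄₃ : ℤ)) :
    ∃ q : ℤ, 0 < q ∧ (c₂ : ℤ) = q * (z / (d : ℤ)) ∧ (d₂₄ : ℤ) = q * (x / (d : ℤ)) ∧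
      (d : ℤ) ∣ (d₄₃ : ℤ) * y ∧ q * ((d₄₃ : ℤ) * y) = (d : ℤ) * b := by
  subst hA
  have h1 := congrFun hrel 1
  have h3 := congrFun hrel 3
  simp [Matrix.mulVec, dotProduct, Fin.sum_univ_four] at h1 h3
  have e2 : (c₂ : ℤ) = (d₂₁ : ℤ) + (d₂₄ : ℤ) := by exact_mod_cast congrArg (Nat.cast (R := ℤ)) hrow2
  have e4 : (c₄ : ℤ) = (d₄₂ : ℤ) + (d₄₃ : ℤ) := by exact_mod_cast congrArg (Nat.cast (R := ℤ)) hrow4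
  have hr2 : (c₂ : ℤ) * x = (d₂₄ : ℤ) * z := by linear_combination -h1 - a * e2
  have hr4 : (d₄₂ : ℤ) * x + (d₄₃ : ℤ) * y = (c₄ : ℤ) * z := by linear_combination h3 + a * e4
  have hgpos : 0 < Int.gcd x z := Int.gcd_pos_of_ne_zero_left z (ne_of_gt hxpos)
  have hdpos : (0 : ℤ) < (d : ℤ) := by rw [hd]; exact_mod_cast hgpos
  have hdx : (d : ℤ) ∣ x := by rw [hd]; exact Int.gcd_dvd_left x z
  have hdz : (d : ℤ) ∣ z := by rw [hd]; exact Int.gcd_dvd_right x z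
  set x' := x / (d : ℤ) with hx'
  set z' := z / (d : ℤ) with hz'
  have hxe : x = (d : ℤ) * x' := ((Int.ediv_mul_cancel hdx).symm).trans (mul_comm _ _)
  have hze : z = (d : ℤ) * z' := ((Int.ediv_mul_cancel hdz).symm).trans (mul_comm _ _)
  have hcop : IsCoprime x' z' := by
    rw [Int.isCoprime_iff_gcd_eq_one, hx', hz', hd]
    exact Int.gcd_div_gcd_div_gcd hgpos
  have hz'pos : 0 < z' := by
    have hpos : 0 < (d : ℤ) * z' := hze ▸ hzpos
    rcases mul_pos_iff.mp hpos with ⟨_, h⟩ | ⟨h, _⟩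
    · exact h
    · exact absurd hdpos (not_lt.mpr h.le)
  have hr2' : (c₂ : ℤ) * x' = (d₂₄ : ℤ) * z' := by
    apply mul_left_cancel₀ (ne_of_gt hdpos)
    rw [hxe, hze] at hr2; linarith [hr2]
  have hz'dvd : z' ∣ (c₂ : ℤ) := hcop.symm.dvd_of_dvd_mul_right ⟨(d₂₄ : ℤ), by linear_combination hr2'⟩
  obtain ⟨q, hq⟩ := hz'dvd
  have hc2pos : (0 : ℤ) < (c₂ : ℤ) := by exact_mod_cast Nat.lt_of_lt_of_le Nat.zero_lt_two hc₂
  have hqpos : 0 < q := by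
    have hpos : 0 < z' * q := hq ▸ hc2pos
    rcases mul_pos_iff.mp hpos with ⟨_, h⟩ | ⟨h, _⟩
    · exact h
    · exact absurd hz'pos (not_lt.mpr h.le)
  have hq2 : (d₂₄ : ℤ) = q * x' := by
    apply mul_left_cancel₀ (ne_of_gt hz'pos)
    linear_combination -hr2' + x' * hq
  have hqz : q * z = (d : ℤ) * (c₂ : ℤ) := by rw [hze, hq]; ring
  have hqx : q * x = (d : ℤ) * (d₂₄ : ℤ) := by rw [hxe, hq2]; ring
  refine ⟨q, hqpos, by rw [hq]; ring, hq2, ?_, ?_⟩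
  · have h43 : (d₄₃ : ℤ) * y = (c₄ : ℤ) * z - (d₄₂ : ℤ) * x := by linarith [hr4]
    rw [h43]
    exact dvd_sub (hdz.mul_left _) (hdx.mul_left _)
  · linear_combination q * hr4 + (c₄ : ℤ) * hqz - (d₄₂ : ℤ) * hqx + (d : ℤ) * (c₄ : ℤ) * e2 +
      (d : ℤ) * (d₂₄ : ℤ) * e4 - (d : ℤ) * hb
end

section
/- Let k be a field. With A and a₁, a₂, a₃, a₄ as in the context (so that A·(a₁, a₂, a₃, a₄)ᵀ = 0), the following five binomials all lie in the kernel I(a) of the k-algebra homomorphism φ_a : k[x₁, x₂, x₃, x₄] → k[t], xᵢ ↦ t^{aᵢ}: x₁^{c₁} − x₃^{d₁₃}x₄^{d₁₄}, x₃^{c₃} − x₁^{d₃₁}x₂^{d₃₂}, x₄^{c₄} − x₂^{d₄₂}x₃^{d₄₃}, x₂^{c₂} − x₁^{d₂₁}x₄^{d₂₄}, and x₁^{d₂₁}x₃^{d₄₃} − x₂^{d₃₂}x₄^{d₁₄}. -/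
/-- The five Bresinsky binomials lie in the kernel of the parametrization map. -/
theorem stmt_15 (k : Type*) [Field k]
    (c₁ c₂ c₃ c₄ d₁₃ d₁₄ d₂₁ d₂₄ d₃₁ d₃₂ d₄₂ d₄₃ : ℕ)
    (hc₁ : 2 ≤ c₁) (hc₂ : 2 ≤ c₂) (hc₃ : 2 ≤ c₃) (hc₄ : 2 ≤ c₄)
    (hd₁₃ : 0 < d₁₃) (hd₁₄ : 0 < d₁₄) (hd₂₁ : 0 < d₂₁) (hd₂₄ : 0 < d₂₄)
    (hd₃₁ : 0 < d₃₁) (hd₃₂ : 0 < d₃₂) (hd₄₂ : 0 < d₄₂) (hd₄₃ : 0 < d₄₃)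
    (hcol₁ : c₁ = d₂₁ + d₃₁) (hcol₂ : c₂ = d₃₂ + d₄₂)
    (hcol₃ : c₃ = d₁₃ + d₄₃) (hcol₄ : c₄ = d₁₄ + d₂₄)
    (A : Matrix (Fin 4) (Fin 4) ℤ)
    (hA : A = !![-(c₁ : ℤ), 0, (d₁₃ : ℤ), (d₁₄ : ℤ);
                 (d₂₁ : ℤ), -(c₂ : ℤ), 0, (d₂₄ : ℤ);
                 (d₃₁ : ℤ), (d₃₂ : ℤ), -(c₃ : ℤ), 0;
                 0, (d₄₂ : ℤ), (d₄₃ : ℤ), -(c₄ : ℤ)])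
    (a : Fin 4 → ℤ)
    (ha : ∀ j : Fin 4, a j = (-1) ^ ((j : ℕ) + 1) *
        (A.submatrix (Fin.succAbove 0) (Fin.succAbove j)).det)
    (φ : MvPolynomial (Fin 4) k →ₐ[k] Polynomial k)
    (hφ : φ = MvPolynomial.aeval
        (fun i : Fin 4 => (Polynomial.X : Polynomial k) ^ (a i).toNat)) :
    MvPolynomial.X (0 : Fin 4) ^ c₁ -
        MvPolynomial.X 2 ^ d₁₃ * MvPolynomial.X 3 ^ d₁₄ ∈ RingHom.ker φ ∧
    MvPolynomial.X (2 : Fin 4) ^ c₃ -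
        MvPolynomial.X 0 ^ d₃₁ * MvPolynomial.X 1 ^ d₃₂ ∈ RingHom.ker φ ∧
    MvPolynomial.X (3 : Fin 4) ^ c₄ -
        MvPolynomial.X 1 ^ d₄₂ * MvPolynomial.X 2 ^ d₄₃ ∈ RingHom.ker φ ∧
    MvPolynomial.X (1 : Fin 4) ^ c₂ -
        MvPolynomial.X 0 ^ d₂₁ * MvPolynomial.X 3 ^ d₂₄ ∈ RingHom.ker φ ∧
    MvPolynomial.X (0 : Fin 4) ^ d₂₁ * MvPolynomial.X 2 ^ d₄₃ -
        MvPolynomial.X 1 ^ d₃₂ * MvPolynomial.X 3 ^ d₁₄ ∈ RingHom.ker φ := by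
  subst hA hφ hcol₁ hcol₂ hcol₃ hcol₄
  have key : ∀ i : Fin 4, ∀ n : ℕ, a i = (n : ℤ) → (a i).toNat = n := by
    intro i n h; rw [h]; exact Int.toNat_natCast n
  have h0 : (a 0).toNat = d₃₂*d₁₃*(d₁₄+d₂₄) + d₃₂*d₄₃*d₁₄ + d₄₂*(d₁₃+d₄₃)*d₁₄ := by
    apply key
    have := ha 0
    norm_num [Matrix.det_fin_three, Fin.succAbove, Fin.lt_def, show ((3:Fin 4):ℕ) = 3 from rfl, show ((2:Fin 4):ℕ) = 2 from rfl, show ((1:Fin 4):ℕ) = 1 from rfl, show (Fin.castSucc 2 : Fin 4) = 2 from rfl] at this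
    rw [this]; push_cast; ring
  have h1 : (a 1).toNat = d₂₁*(d₁₃+d₄₃)*(d₁₄+d₂₄) + d₂₄*d₃₁*d₄₃ := by
    apply key
    have := ha 1
    norm_num [Matrix.det_fin_three, Fin.succAbove, Fin.lt_def, show ((3:Fin 4):ℕ) = 3 from rfl, show ((2:Fin 4):ℕ) = 2 from rfl, show ((1:Fin 4):ℕ) = 1 from rfl, show (Fin.castSucc 2 : Fin 4) = 2 from rfl] at this
    rw [this]; push_cast; ring
  have h2 : (a 2).toNat = (d₂₁+d₃₁)*d₃₂*(d₁₄+d₂₄) + d₃₁*d₄₂*d₁₄ := by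
    apply key
    have := ha 2
    norm_num [Matrix.det_fin_three, Fin.succAbove, Fin.lt_def, show ((3:Fin 4):ℕ) = 3 from rfl, show ((2:Fin 4):ℕ) = 2 from rfl, show ((1:Fin 4):ℕ) = 1 from rfl, show (Fin.castSucc 2 : Fin 4) = 2 from rfl] at this
    rw [this]; push_cast; ring
  have h3 : (a 3).toNat = d₂₁*d₃₂*d₄₃ + d₂₁*(d₁₃+d₄₃)*d₄₂ + (d₃₂+d₄₂)*d₃₁*d₄₃ := by
    apply key
    have := ha 3
    norm_num [Matrix.det_fin_three, Fin.succAbove, Fin.lt_def, show ((3:Fin 4):ℕ) = 3 from rfl, show ((2:Fin 4):ℕ) = 2 from rfl, show ((1:Fin 4):ℕ) = 1 from rfl, show (Fin.castSucc 2 : Fin 4) = 2 from rfl] at this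
    rw [this]; push_cast; ring
  refine ⟨?_, ?_, ?_, ?_, ?_⟩ <;>
  · simp only [RingHom.mem_ker, map_sub, map_mul, map_pow, MvPolynomial.aeval_X,
      h0, h1, h2, h3, ← pow_mul, ← pow_add]
    rw [sub_eq_zero]
    congr 1
    ring
end

section
/- Let R be a commutative ring and let c₁, c₂, c₃, c₄ and d₁₃, d₁₄, d₂₁, d₂₄, d₃₁, d₃₂, d₄₂, d₄₃ be positive integers satisfying c₂ = d₃₂ + d₄₂ and c₄ = d₁₄ + d₂₄ and c₁ = d₂₁ + d₃₁ and c₃ = d₁₃ + d₄₃. In R[x₁, x₂, x₃, x₄], let δ be the row vector (x₁^{c₁} − x₃^{d₁₃}x₄^{d₁₄}, x₃^{c₃} − x₁^{d₃₁}x₂^{d₃₂}, x₄^{c₄} − x₂^{d₄₂}x₃^{d₄₃}, x₂^{c₂} − x₁^{d₂₁}x₄^{d₂₄}, x₁^{d₂₁}x₃^{d₄₃} − x₂^{d₃₂}x₄^{d₁₄}) and let φ be the 5×5 skew-symmetric matrix with rows (0, 0, x₂^{d₃₂}, x₃^{d₄₃}, x₄^{d₂₄}), (0, 0, x₁^{d₂₁},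 x₄^{d₁₄}, x₂^{d₄₂}), (−x₂^{d₃₂}, −x₁^{d₂₁}, 0, 0, x₃^{d₁₃}), (−x₃^{d₄₃}, −x₄^{d₁₄}, 0, 0, x₁^{d₃₁}), (−x₄^{d₂₄}, −x₂^{d₄₂}, −x₃^{d₁₃}, −x₁^{d₃₁}, 0). Then δ·φ = 0, i.e. each of the five entries of the product row vector is the zero polynomial. -/
/-- The Buchsbaum–Eisenbud complex condition `δ · φ = 0` for the Gorenstein
monomial curve resolution. -/
theorem stmt_17 (R : Type*) [CommRing R]
    (c₁ c₂ c₃ c₄ d₁₃ d₁₄ d₂₁ d₂₄ d₃₁ d₃₂ d₄₂ d₄₃ : ℕ)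
    (hc₁ : 0 < c₁) (hc₂ : 0 < c₂) (hc₃ : 0 < c₃) (hc₄ : 0 < c₄)
    (hd₁₃ : 0 < d₁₃) (hd₁₄ : 0 < d₁₄) (hd₂₁ : 0 < d₂₁) (hd₂₄ : 0 < d₂₄)
    (hd₃₁ : 0 < d₃₁) (hd₃₂ : 0 < d₃₂) (hd₄₂ : 0 < d₄₂) (hd₄₃ : 0 < d₄₃)
    (hcol₂ : c₂ = d₃₂ + d₄₂) (hcol₄ : c₄ = d₁₄ + d₂₄)
    (hcol₁ : c₁ = d₂₁ + d₃₁) (hcol₃ : c₃ = d₁₃ + d₄₃)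
    (δ : Fin 5 → MvPolynomial (Fin 4) R)
    (hδ : δ = ![MvPolynomial.X (0 : Fin 4) ^ c₁ -
        MvPolynomial.X 2 ^ d₁₃ * MvPolynomial.X 3 ^ d₁₄,
      MvPolynomial.X (2 : Fin 4) ^ c₃ -
        MvPolynomial.X 0 ^ d₃₁ * MvPolynomial.X 1 ^ d₃₂,
      MvPolynomial.X (3 : Fin 4) ^ c₄ -
        MvPolynomial.X 1 ^ d₄₂ * MvPolynomial.X 2 ^ d₄₃,
      MvPolynomial.X (1 : Fin 4) ^ c₂ -
        MvPolynomial.X 0 ^ d₂₁ * MvPolynomial.X 3 ^ d₂₄,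
      MvPolynomial.X (0 : Fin 4) ^ d₂₁ * MvPolynomial.X 2 ^ d₄₃ -
        MvPolynomial.X 1 ^ d₃₂ * MvPolynomial.X 3 ^ d₁₄])
    (Φ : Matrix (Fin 5) (Fin 5) (MvPolynomial (Fin 4) R))
    (hΦ : Φ = !![0, 0, MvPolynomial.X 1 ^ d₃₂, MvPolynomial.X 2 ^ d₄₃,
                    MvPolynomial.X 3 ^ d₂₄;
                  0, 0, MvPolynomial.X 0 ^ d₂₁, MvPolynomial.X 3 ^ d₁₄,
                    MvPolynomial.X 1 ^ d₄₂;
                  -MvPolynomial.X 1 ^ d₃₂, -MvPolynomial.X 0 ^ d₂₁, 0, 0,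
                    MvPolynomial.X 2 ^ d₁₃;
                  -MvPolynomial.X 2 ^ d₄₃, -MvPolynomial.X 3 ^ d₁₄, 0, 0,
                    MvPolynomial.X 0 ^ d₃₁;
                  -MvPolynomial.X 3 ^ d₂₄, -MvPolynomial.X 1 ^ d₄₂,
                    -MvPolynomial.X 2 ^ d₁₃, -MvPolynomial.X 0 ^ d₃₁, 0]) :
    Matrix.vecMul δ Φ = 0 := by
  subst hδ hΦ hcol₁ hcol₂ hcol₃ hcol₄
  funext j
  fin_cases j <;>
    simp [Matrix.vecMul, dotProduct, Fin.sum_univ_five, pow_add] <;> ring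
end
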